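/- arXiv:2005.07499 — 5 statements merged into one kernel-verified Lean document; each statement's English description precedes it below -/
import Mathlib

section
/- Let A = P₁ − R₁ + S₁ = P₂ − R₂ + S₂ be two double proper splittings of A ∈ ℝ^{m×n} such that N(S₂) ⊇ N(P₂), R(S₂) ⊆ R(P₂), and I − S₂P₁† is nonsingular. Then the preconditioned matrix Â = (I − S₂P₁†)A satisfies Â = P̂ − R̂ + Ŝ with P̂ = P₂, R̂ = R₂ − S₂P₁†R₁, Ŝ = −S₂P₁†S₁, and this is a double proper splitting of Â, i.e. R(Â) = R(P̂) and N(Â) = N(P̂). -/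
open Matrix

/-- Spectral radius of a real square matrix: the maximum modulus of its complex eigenvalues. -/
noncomputable def specRad {ι : Type*} [Fintype ι] [DecidableEq ι] (M : Matrix ι ι ℝ) : ℝ :=
  sSup ((fun z : ℂ => ‖z‖) '' spectrum ℂ (M.map Complex.ofReal))

/-- `X` satisfies the four Penrose equations for `A`, i.e. `X` is the Moore-Penrose
inverse of `A`. -/
def IsMP {m n : ℕ} (A : Matrix (Fin m) (Fin n) ℝ) (X : Matrix (Fin n) (Fin m) ℝ) : Prop :=
  A * X * A = A ∧ X * A * X = X ∧ (A * X)ᵀ = A * X ∧ (X * A)ᵀ = X * A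

/-- Entrywise comparison of matrices: `MatLE A B` means `A ≤ B` entrywise. -/
def MatLE {m n : ℕ} (A B : Matrix (Fin m) (Fin n) ℝ) : Prop := ∀ i j, A i j ≤ B i j

/-- Two matrices agreeing on all matrix-vector products are equal. -/
lemma mat_ext_mulVec {m n : ℕ} (M N : Matrix (Fin m) (Fin n) ℝ)
    (h : ∀ v, M.mulVec v = N.mulVec v) : M = N := by
  ext i j
  have := congrFun (h (Pi.single j 1)) i
  simpa [Matrix.mulVec_single] using this

theorem tgads_induced_double_proper_splitting {m n : ℕ}
    (A P₁ R₁ S₁ P₂ R₂ S₂ : Matrix (Fin m) (Fin n) ℝ)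
    (X₁ : Matrix (Fin n) (Fin m) ℝ)
    (hX₁ : IsMP P₁ X₁)
    (hsplit₁ : A = P₁ - R₁ + S₁)
    (hrange₁ : LinearMap.range (P₁).mulVecLin = LinearMap.range (A).mulVecLin)
    (hker₁ : LinearMap.ker (P₁).mulVecLin = LinearMap.ker (A).mulVecLin)
    (hsplit₂ : A = P₂ - R₂ + S₂)
    (hrange₂ : LinearMap.range (P₂).mulVecLin = LinearMap.range (A).mulVecLin)
    (hker₂ : LinearMap.ker (P₂).mulVecLin = LinearMap.ker (A).mulVecLin)
    (hNS : LinearMap.ker (P₂).mulVecLin ≤ LinearMap.ker (S₂).mulVecLin)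
    (hRS : LinearMap.range (S₂).mulVecLin ≤ LinearMap.range (P₂).mulVecLin)
    (hunit : IsUnit (1 - S₂ * X₁))
    : ((1 - S₂ * X₁) * A = P₂ - (R₂ - S₂ * X₁ * R₁) + (-(S₂ * X₁ * S₁))) ∧ LinearMap.range ((1 - S₂ * X₁) * A).mulVecLin = LinearMap.range (P₂).mulVecLin ∧ LinearMap.ker ((1 - S₂ * X₁) * A).mulVecLin = LinearMap.ker (P₂).mulVecLin := by
  obtain ⟨hP1, -, -, -⟩ := hX₁
  -- kernel containment transferred to P₁
  have hkerS : LinearMap.ker (P₁).mulVecLin ≤ LinearMap.ker (S₂).mulVecLin := by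
    rw [hker₁, ← hker₂]; exact hNS
  -- key identity : S₂ * X₁ * P₁ = S₂
  have hkey : S₂ * X₁ * P₁ = S₂ := by
    apply mat_ext_mulVec
    intro v
    have hmem : v - X₁.mulVec (P₁.mulVec v) ∈ LinearMap.ker (P₁).mulVecLin := by
      simp only [LinearMap.mem_ker, mulVecLin_apply]
      have := congrArg (fun M : Matrix (Fin m) (Fin n) ℝ => M.mulVec v) hP1
      simp only [← Matrix.mulVec_mulVec] at this
      rw [Matrix.mulVec_sub]
      rw [this]
      simp
    have hS := hkerS hmem
    simp only [LinearMap.mem_ker, mulVecLin_apply, Matrix.mulVec_sub] at hS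
    have h2 : S₂.mulVec (X₁.mulVec (P₁.mulVec v)) = S₂.mulVec v :=
      (sub_eq_zero.mp hS).symm
    rw [← h2, Matrix.mul_assoc, ← Matrix.mulVec_mulVec, ← Matrix.mulVec_mulVec]
  -- injectivity of U := 1 - S₂ * X₁
  obtain ⟨V, hVU, hUV⟩ := hunit.nonempty_invertible.some
  have Uinj : Function.Injective (1 - S₂ * X₁).mulVecLin := by
    intro x y hxy
    simp only [mulVecLin_apply] at hxy
    have h3 : (V * (1 - S₂ * X₁)).mulVec x = (V * (1 - S₂ * X₁)).mulVec y := by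
      rw [← Matrix.mulVec_mulVec, ← Matrix.mulVec_mulVec, hxy]
    simpa [hVU] using h3
  -- Part 1: the splitting identity
  have part1 : (1 - S₂ * X₁) * A = P₂ - (R₂ - S₂ * X₁ * R₁) + (-(S₂ * X₁ * S₁)) := by
    have e1 : S₂ * X₁ * A = S₂ - S₂ * X₁ * R₁ + S₂ * X₁ * S₁ := by
      conv_lhs => rw [hsplit₁]
      rw [Matrix.mul_add, Matrix.mul_sub, hkey]
    have e2 : (1 - S₂ * X₁) * A = A - S₂ * X₁ * A := by
      rw [Matrix.sub_mul, Matrix.one_mul]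
    rw [e2, e1]
    conv_lhs => rw [hsplit₂]
    abel
  refine ⟨part1, ?_, ?_⟩
  · -- range
    have hcomp : ((1 - S₂ * X₁) * A).mulVecLin
        = (1 - S₂ * X₁).mulVecLin ∘ₗ A.mulVecLin := Matrix.mulVecLin_mul _ _
    have hmap : LinearMap.range ((1 - S₂ * X₁) * A).mulVecLin
        = Submodule.map (1 - S₂ * X₁).mulVecLin (LinearMap.range A.mulVecLin) := by
      rw [hcomp, LinearMap.range_comp]
    have hRS' : LinearMap.range (S₂).mulVecLin ≤ LinearMap.range (A).mulVecLin := by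
      rw [← hrange₂]; exact hRS
    have hle : LinearMap.range ((1 - S₂ * X₁) * A).mulVecLin
        ≤ LinearMap.range A.mulVecLin := by
      rw [hmap]
      rintro x ⟨y, hy, rfl⟩
      have h4 : (1 - S₂ * X₁).mulVecLin y = y - S₂.mulVec (X₁.mulVec y) := by
        simp [mulVecLin_apply, Matrix.sub_mulVec, Matrix.one_mulVec, ← Matrix.mulVec_mulVec]
      rw [h4]
      exact Submodule.sub_mem _ hy (hRS' ⟨X₁.mulVec y, rfl⟩)
    have hfr : Module.finrank ℝ (LinearMap.range ((1 - S₂ * X₁) * A).mulVecLin)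
        = Module.finrank ℝ (LinearMap.range A.mulVecLin) := by
      rw [hmap]
      exact (Submodule.equivMapOfInjective _ Uinj _).finrank_eq.symm
    rw [hrange₂]
    exact Submodule.eq_of_le_of_finrank_eq hle hfr
  · -- kernel
    rw [hker₂]
    ext x
    simp only [LinearMap.mem_ker, Matrix.mulVecLin_mul, LinearMap.comp_apply]
    constructor
    · intro h
      have : (1 - S₂ * X₁).mulVecLin (A.mulVecLin x) = (1 - S₂ * X₁).mulVecLin 0 := by
        simpa using h
      exact Uinj this
    · intro h
      rw [h]; simp
end

section
/- Let A = P₁ − R₁ + S₁ = P₂ − R₂ + S₂ be two double proper weak regular splittings of a semi-monotone matrix A ∈ ℝ^{m×n}. If N(S₂) ⊇ N(P₂), R(S₂) ⊆ R(P₂), I − S₂P₁† is nonsingular, and Â† ≥ 0 where Â = (I − S₂P₁†)A, then ρ(W₁₂) < 1. -/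
open Matrix

section helpers

private lemma matEXT {k l : ℕ} {M N : Matrix (Fin k) (Fin l) ℝ}
    (h : ∀ v, M.mulVec v = N.mulVec v) : M = N := by
  ext i j
  have := congrFun (h (Pi.single j 1)) i
  simpa using this

private lemma matEXT0 {k l : ℕ} {M : Matrix (Fin k) (Fin l) ℝ}
    (h : ∀ v, M.mulVec v = 0) : M = 0 :=
  matEXT (fun v => by rw [h v, Matrix.zero_mulVec])

private lemma proj_eq {k : ℕ} {E₁ E₂ : Matrix (Fin k) (Fin k) ℝ}
    (h1t : E₁ᵀ = E₁) (h2t : E₂ᵀ = E₂) (h1 : E₁ * E₁ = E₁) (h2 : E₂ * E₂ = E₂)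
    (hker : ∀ v, E₁.mulVec v = 0 ↔ E₂.mulVec v = 0) : E₁ = E₂ := by
  have step : ∀ (F G : Matrix (Fin k) (Fin k) ℝ), F * F = F → G * G = G →
      (∀ v, G.mulVec v = 0 → F.mulVec v = 0) → F * G = F := by
    intro F G hF hG hFG
    have hz : F * (1 - G) = 0 := by
      apply matEXT0
      intro v
      rw [← Matrix.mulVec_mulVec]
      apply hFG
      rw [Matrix.mulVec_mulVec]
      have h0 : G * (1 - G) = 0 := by rw [Matrix.mul_sub, Matrix.mul_one, hG, sub_self]
      rw [h0, Matrix.zero_mulVec]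
    rw [Matrix.mul_sub, Matrix.mul_one, sub_eq_zero] at hz
    exact hz.symm
  have h12 : E₁ * E₂ = E₁ := step E₁ E₂ h1 h2 (fun v hv => (hker v).2 hv)
  have h21 : E₂ * E₁ = E₂ := step E₂ E₁ h2 h1 (fun v hv => (hker v).1 hv)
  calc E₁ = E₁ᵀ := h1t.symm
    _ = (E₁ * E₂)ᵀ := by rw [h12]
    _ = E₂ᵀ * E₁ᵀ := Matrix.transpose_mul _ _
    _ = E₂ * E₁ := by rw [h1t, h2t]
    _ = E₂ := h21

private lemma matle_mul_np {a b c : ℕ} {U : Matrix (Fin a) (Fin b) ℝ} {V : Matrix (Fin b) (Fin c) ℝ}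
    (hU : MatLE U 0) (hV : MatLE V 0) : MatLE 0 (U * V) := by
  intro i j
  have : (0:ℝ) ≤ ∑ k, U i k * V k j :=
    Finset.sum_nonneg fun k _ => mul_nonneg_of_nonpos_of_nonpos (by simpa using hU i k)
      (by simpa using hV k j)
  simpa [Matrix.mul_apply] using this

private lemma matle_mul_pn {a b c : ℕ} {U : Matrix (Fin a) (Fin b) ℝ} {V : Matrix (Fin b) (Fin c) ℝ}
    (hU : MatLE U 0) (hV : MatLE 0 V) : MatLE (U * V) 0 := by
  intro i j
  have : ∑ k, U i k * V k j ≤ 0 :=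
    Finset.sum_nonpos fun k _ => mul_nonpos_iff.2 (Or.inr ⟨by simpa using hU i k, by simpa using hV k j⟩)
  simpa [Matrix.mul_apply] using this

private lemma mulVec_nn {a b : ℕ} {U : Matrix (Fin a) (Fin b) ℝ} {v : Fin b → ℝ}
    (hU : MatLE 0 U) (hv : ∀ j, 0 ≤ v j) : ∀ i, 0 ≤ U.mulVec v i := by
  intro i
  have : (0:ℝ) ≤ ∑ k, U i k * v k :=
    Finset.sum_nonneg fun k _ => mul_nonneg (by simpa using hU i k) (hv k)
  simpa [Matrix.mulVec, dotProduct] using this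

private lemma specBound {ι : Type*} [Fintype ι] [DecidableEq ι]
    (W : Matrix ι ι ℝ) (x : ι → ℝ) (γ : ℝ) (hγ : 0 ≤ γ)
    (hW : ∀ i j, 0 ≤ W i j) (hx : ∀ i, 0 < x i)
    (hWx : ∀ i, W.mulVec x i ≤ γ * x i) :
    specRad W ≤ γ := by
  apply Real.sSup_le _ hγ
  rintro r ⟨z, hz, rfl⟩
  rw [spectrum.mem_iff] at hz
  set Wc := W.map (Complex.ofReal) with hWc
  have hdet : (algebraMap ℂ (Matrix ι ι ℂ) z - Wc).det = 0 := by
    by_contra h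
    exact hz ((Matrix.isUnit_iff_isUnit_det _).2 (isUnit_iff_ne_zero.2 h))
  obtain ⟨v, hv0, hv⟩ := (Matrix.exists_mulVec_eq_zero_iff).2 hdet
  have hev : Wc.mulVec v = fun i => z * v i := by
    have h1 : (algebraMap ℂ (Matrix ι ι ℂ) z).mulVec v - Wc.mulVec v = 0 := by
      rw [← Matrix.sub_mulVec, hv]
    have h2 : (algebraMap ℂ (Matrix ι ι ℂ) z).mulVec v = fun i => z * v i := by
      rw [Algebra.algebraMap_eq_smul_one]
      funext i
      simp [Matrix.smul_mulVec, Matrix.one_mulVec]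
    funext i
    have := congrFun (sub_eq_zero.1 h1) i
    rw [h2] at this
    exact this.symm
  obtain ⟨j, hj⟩ := Function.ne_iff.1 hv0
  obtain ⟨i, -, hi⟩ := Finset.exists_max_image Finset.univ
    (fun k => ‖v k‖ / x k) ⟨j, Finset.mem_univ j⟩
  have hj' : v j ≠ 0 := by simpa using hj
  have hvi : 0 < ‖v i‖ := by
    have hji := hi j (Finset.mem_univ j)
    have h0 : 0 < ‖v j‖ / x j :=
      div_pos (norm_pos_iff.2 hj') (hx j)
    have h2 : 0 < ‖v i‖ / x i := lt_of_lt_of_le h0 hji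
    by_contra h
    push_neg at h
    rw [le_antisymm h (norm_nonneg _)] at h2
    simp at h2
  have key : ∀ k, ‖v k‖ ≤ ‖v i‖ / x i * x k := by
    intro k
    have := hi k (Finset.mem_univ k)
    rw [div_le_div_iff₀ (hx k) (hx i)] at this
    rw [div_mul_eq_mul_div, le_div_iff₀ (hx i)]
    linarith
  have main : ‖z‖ * ‖v i‖ ≤ γ * ‖v i‖ := by
    have e1 : ‖z‖ * ‖v i‖ = ‖(Wc.mulVec v) i‖ := by
      rw [hev]
      exact (norm_mul z (v i)).symm
    rw [e1]
    have e2 : (Wc.mulVec v) i = ∑ k, (W i k : ℂ) * v k := by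
      simp [Matrix.mulVec, dotProduct, hWc]
    rw [e2]
    calc ‖∑ k, (W i k : ℂ) * v k‖
        ≤ ∑ k, ‖(W i k : ℂ) * v k‖ := norm_sum_le _ _
      _ = ∑ k, W i k * ‖v k‖ := by
          apply Finset.sum_congr rfl
          intro k _
          rw [norm_mul, Complex.norm_real, Real.norm_eq_abs, abs_of_nonneg (hW i k)]
      _ ≤ ∑ k, W i k * (‖v i‖ / x i * x k) := by
          apply Finset.sum_le_sum
          intro k _
          exact mul_le_mul_of_nonneg_left (key k) (hW i k)
      _ = (‖v i‖ / x i) * ∑ k, W i k * x k := by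
          rw [Finset.mul_sum]; apply Finset.sum_congr rfl; intro k _; ring
      _ = (‖v i‖ / x i) * (W.mulVec x i) := by
          have e3 : W.mulVec x i = ∑ k, W i k * x k := by
            simp [Matrix.mulVec, dotProduct]
          rw [e3]
      _ ≤ (‖v i‖ / x i) * (γ * x i) := by
          exact mul_le_mul_of_nonneg_left (hWx i)
            (div_nonneg (norm_nonneg _) (le_of_lt (hx i)))
      _ = γ * ‖v i‖ := by
          field_simp [(hx i).ne']
  exact le_of_mul_le_mul_right main hvi

end helpers

set_option maxHeartbeats 2000000 in
theorem tgads_convergence_weak_regular {m n : ℕ}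
    (A P₁ R₁ S₁ P₂ R₂ S₂ : Matrix (Fin m) (Fin n) ℝ)
    (XA X₁ X₂ Xhat : Matrix (Fin n) (Fin m) ℝ)
    (hX₁ : IsMP P₁ X₁)
    (hX₂ : IsMP P₂ X₂)
    (hXA : IsMP A XA)
    (hsemi : MatLE 0 XA)
    (hsplit₁ : A = P₁ - R₁ + S₁)
    (hrange₁ : LinearMap.range (P₁).mulVecLin = LinearMap.range (A).mulVecLin)
    (hker₁ : LinearMap.ker (P₁).mulVecLin = LinearMap.ker (A).mulVecLin)
    (hwr₁a : MatLE 0 X₁)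
    (hwr₁b : MatLE 0 (X₁ * R₁))
    (hwr₁c : MatLE (X₁ * S₁) 0)
    (hsplit₂ : A = P₂ - R₂ + S₂)
    (hrange₂ : LinearMap.range (P₂).mulVecLin = LinearMap.range (A).mulVecLin)
    (hker₂ : LinearMap.ker (P₂).mulVecLin = LinearMap.ker (A).mulVecLin)
    (hwr₂a : MatLE 0 X₂)
    (hwr₂b : MatLE 0 (X₂ * R₂))
    (hwr₂c : MatLE (X₂ * S₂) 0)
    (hNS : LinearMap.ker (P₂).mulVecLin ≤ LinearMap.ker (S₂).mulVecLin)
    (hRS : LinearMap.range (S₂).mulVecLin ≤ LinearMap.range (P₂).mulVecLin)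
    (hunit : IsUnit (1 - S₂ * X₁))
    (hXhat : IsMP ((1 - S₂ * X₁) * A) Xhat)
    (hXhatpos : MatLE 0 Xhat)
    : specRad (Matrix.fromBlocks (X₂ * R₂ - X₂ * S₂ * X₁ * R₁) (X₂ * S₂ * X₁ * S₁) 1 0) < 1 := by
  obtain ⟨hP₁1, hP₁2, hP₁3, hP₁4⟩ := hX₁
  obtain ⟨hP₂1, hP₂2, hP₂3, hP₂4⟩ := hX₂
  have hMl : (↑hunit.unit⁻¹ : Matrix (Fin m) (Fin m) ℝ) * (1 - S₂ * X₁) = 1 := hunit.val_inv_mul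
  have hMr : (1 - S₂ * X₁) * (↑hunit.unit⁻¹ : Matrix (Fin m) (Fin m) ℝ) = 1 := hunit.mul_val_inv
  set Minv : Matrix (Fin m) (Fin m) ℝ := (↑hunit.unit⁻¹ : Matrix (Fin m) (Fin m) ℝ) with hMinv
  set Ah : Matrix (Fin m) (Fin n) ℝ := (1 - S₂ * X₁) * A with hAhdef
  obtain ⟨hA1, hA2, hA3, hA4⟩ := hXhat
  -- kernel facts
  have kerP₁ : ∀ v, P₁.mulVec v = 0 ↔ A.mulVec v = 0 := by
    intro v
    have h1 : v ∈ LinearMap.ker P₁.mulVecLin ↔ v ∈ LinearMap.ker A.mulVecLin := by rw [hker₁]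
    simpa [LinearMap.mem_ker, Matrix.mulVecLin_apply] using h1
  have kerP₂ : ∀ v, P₂.mulVec v = 0 ↔ A.mulVec v = 0 := by
    intro v
    have h1 : v ∈ LinearMap.ker P₂.mulVecLin ↔ v ∈ LinearMap.ker A.mulVecLin := by rw [hker₂]
    simpa [LinearMap.mem_ker, Matrix.mulVecLin_apply] using h1
  have kerS₂ : ∀ v, P₂.mulVec v = 0 → S₂.mulVec v = 0 := by
    intro v h
    have h2 : v ∈ LinearMap.ker S₂.mulVecLin :=
      hNS (by simpa [LinearMap.mem_ker, Matrix.mulVecLin_apply] using h)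
    simpa [LinearMap.mem_ker, Matrix.mulVecLin_apply] using h2
  have kerAh : ∀ v, Ah.mulVec v = 0 ↔ A.mulVec v = 0 := by
    intro v
    constructor
    · intro h
      have hMA : Minv * Ah = A := by rw [hAhdef, ← Matrix.mul_assoc, hMl, Matrix.one_mul]
      calc A.mulVec v = (Minv * Ah).mulVec v := by rw [hMA]
        _ = Minv.mulVec (Ah.mulVec v) := (Matrix.mulVec_mulVec _ _ _).symm
        _ = 0 := by rw [h, Matrix.mulVec_zero]
    · intro h
      rw [hAhdef, ← Matrix.mulVec_mulVec, h, Matrix.mulVec_zero]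
  have kerX₂P₂ : ∀ v, (X₂ * P₂).mulVec v = 0 ↔ P₂.mulVec v = 0 := by
    intro v
    constructor
    · intro h
      calc P₂.mulVec v = (P₂ * (X₂ * P₂)).mulVec v := by
            rw [← Matrix.mul_assoc, hP₂1]
        _ = P₂.mulVec ((X₂ * P₂).mulVec v) := (Matrix.mulVec_mulVec _ _ _).symm
        _ = 0 := by rw [h, Matrix.mulVec_zero]
    · intro h
      rw [← Matrix.mulVec_mulVec, h, Matrix.mulVec_zero]
  have kerZAh : ∀ v, (Xhat * Ah).mulVec v = 0 ↔ Ah.mulVec v = 0 := by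
    intro v
    constructor
    · intro h
      calc Ah.mulVec v = (Ah * (Xhat * Ah)).mulVec v := by
            rw [← Matrix.mul_assoc, hA1]
        _ = Ah.mulVec ((Xhat * Ah).mulVec v) := (Matrix.mulVec_mulVec _ _ _).symm
        _ = 0 := by rw [h, Matrix.mulVec_zero]
    · intro h
      rw [← Matrix.mulVec_mulVec, h, Matrix.mulVec_zero]
  -- projector identity
  have hQidem : X₂ * P₂ * (X₂ * P₂) = X₂ * P₂ := by
    calc X₂ * P₂ * (X₂ * P₂) = X₂ * (P₂ * X₂ * P₂) := by
          simp only [Matrix.mul_assoc]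
      _ = X₂ * P₂ := by rw [hP₂1]
  have hQ : X₂ * P₂ = Xhat * Ah := by
    apply proj_eq hP₂4 hA4 hQidem
    · calc Xhat * Ah * (Xhat * Ah) = Xhat * (Ah * Xhat * Ah) := by
            simp only [Matrix.mul_assoc]
        _ = Xhat * Ah := by rw [hA1]
    · intro v
      exact (kerX₂P₂ v).trans ((kerP₂ v).trans ((kerAh v).symm.trans (kerZAh v).symm))
  -- fact I
  have hI : S₂ * (X₁ * P₁) = S₂ := by
    have hz : S₂ * (X₁ * P₁ - 1) = 0 := by
      apply matEXT0
      intro v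
      rw [← Matrix.mulVec_mulVec]
      apply kerS₂
      apply (kerP₂ _).2
      apply (kerP₁ _).1
      rw [Matrix.mulVec_mulVec, Matrix.mul_sub, Matrix.mul_one, ← Matrix.mul_assoc, hP₁1,
        sub_self, Matrix.zero_mulVec]
    rw [Matrix.mul_sub, Matrix.mul_one, sub_eq_zero] at hz
    exact hz
  -- range equality
  have hrangeAh : LinearMap.range Ah.mulVecLin = LinearMap.range A.mulVecLin := by
    have hle : LinearMap.range Ah.mulVecLin ≤ LinearMap.range A.mulVecLin := by
      rintro y ⟨x, rfl⟩
      rw [Matrix.mulVecLin_apply, hAhdef, Matrix.sub_mul, Matrix.one_mul, Matrix.sub_mulVec]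
      apply sub_mem
      · exact LinearMap.mem_range.2 ⟨x, by rw [Matrix.mulVecLin_apply]⟩
      · have h1 : (S₂ * X₁ * A).mulVec x ∈ LinearMap.range S₂.mulVecLin := by
          rw [Matrix.mul_assoc, ← Matrix.mulVec_mulVec]
          exact LinearMap.mem_range.2 ⟨(X₁ * A).mulVec x, by rw [Matrix.mulVecLin_apply]⟩
        exact (hrange₂ ▸ hRS) h1
    let eM : (Fin m → ℝ) ≃ₗ[ℝ] (Fin m → ℝ) :=
      LinearEquiv.ofLinear (1 - S₂ * X₁).mulVecLin Minv.mulVecLin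
        (by rw [← Matrix.mulVecLin_mul, hMr, Matrix.mulVecLin_one])
        (by rw [← Matrix.mulVecLin_mul, hMl, Matrix.mulVecLin_one])
    have hcomp : Ah.mulVecLin = (eM : (Fin m → ℝ) →ₗ[ℝ] (Fin m → ℝ)) ∘ₗ A.mulVecLin := by
      rw [hAhdef, Matrix.mulVecLin_mul]
      rfl
    have hrr : LinearMap.range Ah.mulVecLin
        = (LinearMap.range A.mulVecLin).map (eM : (Fin m → ℝ) →ₗ[ℝ] (Fin m → ℝ)) := by
      rw [hcomp, LinearMap.range_comp]
    apply Submodule.eq_of_le_of_finrank_le hle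
    rw [hrr]
    exact le_of_eq (LinearEquiv.finrank_map_eq eM _).symm
  -- fixing of columns of P₂
  have hfix : Ah * Xhat * P₂ = P₂ := by
    apply matEXT
    intro v
    have hmem : P₂.mulVec v ∈ LinearMap.range Ah.mulVecLin := by
      rw [hrangeAh, ← hrange₂]
      exact LinearMap.mem_range.2 ⟨v, by rw [Matrix.mulVecLin_apply]⟩
    obtain ⟨w, hw⟩ := hmem
    rw [Matrix.mulVecLin_apply] at hw
    calc (Ah * Xhat * P₂).mulVec v = (Ah * Xhat).mulVec (P₂.mulVec v) := by
          rw [← Matrix.mulVec_mulVec]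
      _ = (Ah * Xhat).mulVec (Ah.mulVec w) := by rw [hw]
      _ = (Ah * Xhat * Ah).mulVec w := Matrix.mulVec_mulVec _ _ _
      _ = P₂.mulVec v := by rw [hA1, hw]
  -- fact IV
  have hIV : X₂ * (Ah * Xhat) = X₂ := by
    have hx2 : X₂ᵀ = P₂ * (X₂ * X₂ᵀ) := by
      have h1 : X₂ = X₂ * (X₂ᵀ * P₂ᵀ) := by
        calc X₂ = X₂ * P₂ * X₂ := hP₂2.symm
          _ = X₂ * (P₂ * X₂) := Matrix.mul_assoc _ _ _
          _ = X₂ * (P₂ * X₂)ᵀ := by rw [hP₂3]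
          _ = X₂ * (X₂ᵀ * P₂ᵀ) := by rw [Matrix.transpose_mul]
      calc X₂ᵀ = (X₂ * (X₂ᵀ * P₂ᵀ))ᵀ := by rw [← h1]
        _ = (X₂ᵀ * P₂ᵀ)ᵀ * X₂ᵀ := Matrix.transpose_mul _ _
        _ = P₂ᵀᵀ * X₂ᵀᵀ * X₂ᵀ := by rw [Matrix.transpose_mul]
        _ = P₂ * (X₂ * X₂ᵀ) := by
            rw [Matrix.transpose_transpose, Matrix.transpose_transpose, Matrix.mul_assoc]
    have h2 : (1 - Ah * Xhat) * P₂ = 0 := by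
      rw [Matrix.sub_mul, Matrix.one_mul, hfix, sub_self]
    have hz : (1 - Ah * Xhat) * X₂ᵀ = 0 := by
      rw [hx2, ← Matrix.mul_assoc, h2, Matrix.zero_mul]
    have h4 : (1 - Ah * Xhat)ᵀ = 1 - Ah * Xhat := by
      rw [Matrix.transpose_sub, Matrix.transpose_one, hA3]
    have h3 : X₂ * (1 - Ah * Xhat) = 0 := by
      calc X₂ * (1 - Ah * Xhat) = X₂ᵀᵀ * (1 - Ah * Xhat)ᵀ := by
            rw [Matrix.transpose_transpose, h4]
        _ = ((1 - Ah * Xhat) * X₂ᵀ)ᵀ := (Matrix.transpose_mul _ _).symm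
        _ = 0 := by rw [hz, Matrix.transpose_zero]
    rw [Matrix.mul_sub, Matrix.mul_one, sub_eq_zero] at h3
    exact h3.symm
  -- fact II
  set B : Matrix (Fin n) (Fin n) ℝ := X₂ * R₂ - X₂ * S₂ * X₁ * R₁ with hBdef
  set C : Matrix (Fin n) (Fin n) ℝ := X₂ * S₂ * X₁ * S₁ with hCdef
  have hS₁e : S₁ = A - P₁ + R₁ := by rw [hsplit₁]; abel
  have hR₂e : R₂ = P₂ + S₂ - A := by rw [hsplit₂]; abel
  have hT : B + C = X₂ * P₂ - X₂ * Ah := by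
    have key : B + C - (X₂ * P₂ - X₂ * Ah) = X₂ * S₂ - X₂ * (S₂ * (X₁ * P₁)) := by
      rw [hBdef, hCdef, hAhdef, hS₁e, hR₂e]
      simp only [Matrix.mul_sub, Matrix.sub_mul, Matrix.mul_add, Matrix.add_mul,
        Matrix.mul_assoc, Matrix.one_mul, Matrix.mul_one]
      abel
    rw [hI, sub_self] at key
    exact sub_eq_zero.1 key
  -- iteration matrix identities
  have hTZ : (B + C) * Xhat = Xhat - X₂ := by
    rw [hT, Matrix.sub_mul]
    have e1 : X₂ * P₂ * Xhat = Xhat := by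
      rw [hQ]
      exact hA2
    have e2 : X₂ * Ah * Xhat = X₂ := by
      rw [Matrix.mul_assoc]
      exact hIV
    rw [e1, e2]
  have hTP : (B + C) * (1 - X₂ * P₂) = 0 := by
    rw [hT]
    have e3 : X₂ * Ah * (X₂ * P₂) = X₂ * Ah := by
      rw [hQ, ← Matrix.mul_assoc, Matrix.mul_assoc X₂ Ah Xhat, hIV]
    calc (X₂ * P₂ - X₂ * Ah) * (1 - X₂ * P₂)
        = X₂ * P₂ - X₂ * P₂ * (X₂ * P₂) - (X₂ * Ah - X₂ * Ah * (X₂ * P₂)) := by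
          rw [Matrix.sub_mul, Matrix.mul_sub, Matrix.mul_sub, Matrix.mul_one, Matrix.mul_one]
      _ = 0 := by rw [e3, hQidem]; abel
  -- the positive vector
  set e1n : Fin n → ℝ := fun _ => 1 with he1n
  set cv : Fin m → ℝ := fun i => max (P₂.mulVec e1n i) 0 + max (Ah.mulVec e1n i) 0 with hcv
  have hcgeP : ∀ i, P₂.mulVec e1n i ≤ cv i := fun i =>
    le_add_of_le_of_nonneg (le_max_left _ _) (le_max_right _ _)
  have hcgeAh : ∀ i, Ah.mulVec e1n i ≤ cv i := fun i =>
    le_add_of_nonneg_of_le (le_max_right _ _) (le_max_left _ _)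
  set u : Fin n → ℝ := Xhat.mulVec cv + e1n - (X₂ * P₂).mulVec e1n with hu
  have key1 : ∀ i, 1 ≤ u i := by
    intro i
    have hrw : (X₂ * P₂).mulVec e1n = Xhat.mulVec (Ah.mulVec e1n) := by
      rw [hQ, ← Matrix.mulVec_mulVec]
    have hsplit : u = Xhat.mulVec (cv - Ah.mulVec e1n) + e1n := by
      rw [hu, hrw, Matrix.mulVec_sub]
      funext j
      simp only [Pi.add_apply, Pi.sub_apply]
      ring
    have h0 : 0 ≤ Xhat.mulVec (cv - Ah.mulVec e1n) i :=
      mulVec_nn hXhatpos (fun j => sub_nonneg.2 (hcgeAh j)) i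
    have : u i = Xhat.mulVec (cv - Ah.mulVec e1n) i + 1 := by
      rw [hsplit]; simp [he1n]
    rw [this]
    linarith
  have key2 : ∀ i, (B + C).mulVec u i ≤ u i - 1 := by
    have hTu : (B + C).mulVec u = Xhat.mulVec cv - X₂.mulVec cv := by
      have hq : u = Xhat.mulVec cv + (1 - X₂ * P₂).mulVec e1n := by
        rw [hu, Matrix.sub_mulVec, Matrix.one_mulVec]
        funext j
        simp only [Pi.add_apply, Pi.sub_apply]
        ring
      rw [hq, Matrix.mulVec_add, Matrix.mulVec_mulVec, Matrix.mulVec_mulVec, hTZ, hTP,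
        Matrix.zero_mulVec, Matrix.sub_mulVec]
      funext j
      simp
    intro i
    have hX₂c : 0 ≤ X₂.mulVec (cv - P₂.mulVec e1n) i :=
      mulVec_nn hwr₂a (fun j => sub_nonneg.2 (hcgeP j)) i
    have hexp : u i - (B + C).mulVec u i = 1 + X₂.mulVec (cv - P₂.mulVec e1n) i := by
      rw [hTu, hu]
      have h1 : (X₂ * P₂).mulVec e1n = X₂.mulVec (P₂.mulVec e1n) := (Matrix.mulVec_mulVec _ _ _).symm
      rw [h1, Matrix.mulVec_sub]
      simp only [Pi.add_apply, Pi.sub_apply, he1n]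
      ring
    linarith
  -- nonnegativity of the blocks
  have hBpos : MatLE 0 B := by
    intro i j
    have h1 : 0 ≤ (X₂ * R₂) i j := by simpa using hwr₂b i j
    have h2 : (X₂ * S₂ * X₁ * R₁) i j ≤ 0 := by
      have heq : X₂ * S₂ * X₁ * R₁ = (X₂ * S₂) * (X₁ * R₁) := by
        simp only [Matrix.mul_assoc]
      rw [heq]
      simpa using matle_mul_pn hwr₂c hwr₁b i j
    have : (0:ℝ) ≤ (X₂ * R₂) i j - (X₂ * S₂ * X₁ * R₁) i j := by linarith
    simpa [hBdef, Matrix.sub_apply] using this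
  have hCpos : MatLE 0 C := by
    have heq : C = (X₂ * S₂) * (X₁ * S₁) := by rw [hCdef]; simp only [Matrix.mul_assoc]
    rw [heq]
    exact matle_mul_np hwr₂c hwr₁c
  have hu0 : ∀ i, 0 ≤ u i := fun i => le_trans zero_le_one (key1 i)
  have hBu0 : ∀ i, 0 ≤ B.mulVec u i := mulVec_nn hBpos hu0
  have hCu0 : ∀ i, 0 ≤ C.mulVec u i := mulVec_nn hCpos hu0
  have hBCu : ∀ i, B.mulVec u i + C.mulVec u i ≤ u i - 1 := by
    intro i
    have := key2 i
    rw [Matrix.add_mulVec] at this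
    simpa using this
  -- the constants
  set c0 : ℝ := 1 + ∑ i, u i with hc0def
  have hc0 : 1 ≤ c0 := by
    have : 0 ≤ ∑ i, u i := Finset.sum_nonneg fun i _ => hu0 i
    rw [hc0def]; linarith
  have hc0pos : 0 < c0 := lt_of_lt_of_le one_pos hc0
  have huc : ∀ i, u i ≤ c0 := by
    intro i
    have := Finset.single_le_sum (f := u) (fun j _ => hu0 j) (Finset.mem_univ i)
    rw [hc0def]; linarith
  set δ : ℝ := 1 / (2 * c0) with hδdef
  have hδpos : 0 < δ := by rw [hδdef]; positivity
  have hδc0 : δ * c0 = 1 / 2 := by rw [hδdef]; field_simp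
  have hδu : ∀ i, δ * u i ≤ 1 / 2 := fun i => by
    calc δ * u i ≤ δ * c0 := mul_le_mul_of_nonneg_left (huc i) hδpos.le
      _ = 1 / 2 := hδc0
  have hδhalf : δ ≤ 1 / 2 := by
    have := hδu  -- not needed
    calc δ = δ * 1 := (mul_one δ).symm
      _ ≤ δ * c0 := mul_le_mul_of_nonneg_left hc0 hδpos.le
      _ = 1 / 2 := hδc0
  set γ : ℝ := 1 - δ with hγdef
  have hγlt : γ < 1 := by rw [hγdef]; linarith
  have hγhalf : (1:ℝ) / 2 ≤ γ := by rw [hγdef]; linarith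
  have hγ0 : 0 ≤ γ := le_trans (by norm_num) hγhalf
  -- assemble
  set x : (Fin n ⊕ Fin n) → ℝ := Sum.elim (fun i => γ * u i) u with hx
  have hW : ∀ i j, 0 ≤ (Matrix.fromBlocks B C 1 0 : Matrix (Fin n ⊕ Fin n) (Fin n ⊕ Fin n) ℝ) i j := by
    rintro (i | i) (j | j)
    · simpa using hBpos i j
    · simpa using hCpos i j
    · rw [Matrix.fromBlocks_apply₂₁, Matrix.one_apply]
      split <;> norm_num
    · simp
  have hxpos : ∀ i, 0 < x i := by
    rintro (i | i)
    · have : 0 < γ * u i := mul_pos (lt_of_lt_of_le (by norm_num) hγhalf)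
        (lt_of_lt_of_le one_pos (key1 i))
      simpa [hx] using this
    · simpa [hx] using lt_of_lt_of_le one_pos (key1 i)
  have hWx : ∀ i, (Matrix.fromBlocks B C 1 0).mulVec x i ≤ γ * x i := by
    have hmv : (Matrix.fromBlocks B C 1 0).mulVec x
        = Sum.elim (B.mulVec (fun i => γ * u i) + C.mulVec u)
          ((1 : Matrix (Fin n) (Fin n) ℝ).mulVec (fun i => γ * u i)
            + (0 : Matrix (Fin n) (Fin n) ℝ).mulVec u) := by
      rw [hx, Matrix.fromBlocks_mulVec]
      rw [Sum.elim_comp_inl, Sum.elim_comp_inr]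
    have hsm : B.mulVec (fun j => γ * u j) = fun i => γ * B.mulVec u i := by
      funext i
      simp only [Matrix.mulVec, dotProduct]
      rw [Finset.mul_sum]
      exact Finset.sum_congr rfl fun k _ => by ring
    rintro (i | i)
    · rw [hmv]
      simp only [Sum.elim_inl, Pi.add_apply, hsm]
      have ha := hBu0 i
      have hb := hCu0 i
      have hab := hBCu i
      have hdu := hδu i
      have hu1 := key1 i
      have hxi : x (Sum.inl i) = γ * u i := by rw [hx]; simp
      rw [hxi, hγdef]
      nlinarith [mul_nonneg hδpos.le ha, mul_nonneg (mul_nonneg hδpos.le hδpos.le) (hu0 i)]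
    · rw [hmv]
      simp only [Sum.elim_inr, Pi.add_apply, Matrix.one_mulVec, Matrix.zero_mulVec]
      have hxi : x (Sum.inr i) = u i := by rw [hx]; simp
      rw [hxi]
      simp [add_zero]
  calc specRad (Matrix.fromBlocks B C 1 0) ≤ γ := specBound _ x γ hγ0 hW hxpos hWx
    _ < 1 := hγlt
end

section
/- Let A = P₁ − R₁ + S₁ = P₂ − R₂ + S₂ be two double proper weak splittings of A ∈ ℝ^{m×n}. If Â†P̂ ≥ 0 where Â = (I − S₂P₁†)A and P̂ = P₂, N(S₂) ⊇ N(P₂), R(S₂) ⊆ R(P₂), and I − S₂P₁† is nonsingular, then ρ(W₁₂) < 1. -/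
open Matrix

open Filter Topology

namespace TGADSaux

set_option linter.unusedSectionVars false

attribute [local instance] Matrix.linftyOpNormedRing Matrix.linftyOpNormedAlgebra

variable {ι : Type*} [Fintype ι] [DecidableEq ι]

/-- complexification of a real matrix -/
noncomputable def cx (M : Matrix ι ι ℝ) : Matrix ι ι ℂ := M.map Complex.ofReal

lemma cx_mul (M N : Matrix ι ι ℝ) : cx (M * N) = cx M * cx N := by
  ext i j
  simp only [cx, Matrix.map_apply, Matrix.mul_apply]
  push_cast
  rfl

lemma cx_pow (M : Matrix ι ι ℝ) (k : ℕ) : cx (M ^ k) = cx M ^ k := by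
  induction k with
  | zero => simp [cx, pow_zero, Matrix.map_one]
  | succ k ih => rw [pow_succ, pow_succ, cx_mul, ih]

lemma norm_cx_eq (M : Matrix ι ι ℝ) : ‖cx M‖ = ‖M‖ := by
  rw [Matrix.linfty_opNorm_def, Matrix.linfty_opNorm_def]
  congr 1
  refine Finset.sup_congr rfl fun i _ => ?_
  refine Finset.sum_congr rfl fun j _ => ?_
  simp [cx]

lemma norm_le_of_le {M N : Matrix ι ι ℝ} (h : ∀ i j, |M i j| ≤ N i j) :
    ‖M‖ ≤ ‖N‖ := by
  rw [Matrix.linfty_opNorm_def, Matrix.linfty_opNorm_def]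
  have : ∀ i : ι, (∑ j, ‖M i j‖₊) ≤ ∑ j, ‖N i j‖₊ := by
    intro i
    refine Finset.sum_le_sum fun j _ => ?_
    rw [← NNReal.coe_le_coe]
    simpa [Real.norm_eq_abs] using (h i j).trans (le_abs_self _)
  exact_mod_cast Finset.sup_mono_fun fun i _ => this i

lemma norm_cx_le_of_le {M N : Matrix ι ι ℝ} (h : ∀ i j, |M i j| ≤ N i j) :
    ‖cx M‖ ≤ ‖cx N‖ := by
  rw [norm_cx_eq, norm_cx_eq]; exact norm_le_of_le h

/-- The spectral radius as a real number. -/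
noncomputable def rad (M : Matrix ι ι ℂ) : ℝ := (spectralRadius ℂ M).toReal

lemma rad_nonneg (M : Matrix ι ι ℂ) : 0 ≤ rad M := ENNReal.toReal_nonneg

lemma spectralRadius_ne_top [Nonempty ι] (M : Matrix ι ι ℂ) : spectralRadius ℂ M ≠ ⊤ :=
  ((spectrum.spectralRadius_le_nnnorm (𝕜 := ℂ) M).trans_lt ENNReal.coe_lt_top).ne

lemma rad_le_norm [Nonempty ι] (M : Matrix ι ι ℂ) : rad M ≤ ‖M‖ := by
  have := spectrum.spectralRadius_le_nnnorm (𝕜 := ℂ) M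
  have h2 := ENNReal.toReal_mono ENNReal.coe_ne_top this
  simpa [rad] using h2

lemma gelfand [Nonempty ι] (M : Matrix ι ι ℂ) :
    Tendsto (fun k : ℕ => ‖M ^ k‖ ^ (1/k : ℝ)) atTop (𝓝 (rad M)) := by
  have h := spectrum.pow_norm_pow_one_div_tendsto_nhds_spectralRadius M
  have h2 := (ENNReal.tendsto_toReal (spectralRadius_ne_top M)).comp h
  have : (fun k : ℕ => (ENNReal.ofReal (‖M ^ k‖ ^ (1/k : ℝ))).toReal)
      = fun k : ℕ => ‖M ^ k‖ ^ (1/k : ℝ) := by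
    funext k
    rw [ENNReal.toReal_ofReal (Real.rpow_nonneg (norm_nonneg _) _)]
  rw [Function.comp_def, this] at h2
  exact h2

lemma abs_le_rad [Nonempty ι] {M : Matrix ι ι ℂ} {z : ℂ} (h : z ∈ spectrum ℂ M) :
    ‖z‖ ≤ rad M := by
  have h1 : (‖z‖₊ : ENNReal) ≤ spectralRadius ℂ M := le_iSup₂ (α := ENNReal) z h
  have h2 := ENNReal.toReal_mono (spectralRadius_ne_top M) h1
  simpa [rad] using h2

lemma mem_spectrum_iff_eigen (M : Matrix ι ι ℂ) {z : ℂ} :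
    z ∈ spectrum ℂ M ↔ ∃ v, v ≠ 0 ∧ M *ᵥ v = z • v := by
  rw [spectrum.mem_iff, Matrix.isUnit_iff_isUnit_det, isUnit_iff_ne_zero, not_not,
    ← Matrix.exists_mulVec_eq_zero_iff]
  constructor
  · rintro ⟨v, hv, he⟩
    refine ⟨v, hv, ?_⟩
    have : (algebraMap ℂ (Matrix ι ι ℂ)) z *ᵥ v - M *ᵥ v = 0 := by
      rw [← Matrix.sub_mulVec]; exact he
    have h2 : (algebraMap ℂ (Matrix ι ι ℂ)) z *ᵥ v = z • v := by
      simp [Algebra.algebraMap_eq_smul_one, Matrix.smul_mulVec]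
    rw [h2] at this
    exact (sub_eq_zero.mp this).symm
  · rintro ⟨v, hv, he⟩
    refine ⟨v, hv, ?_⟩
    rw [Matrix.sub_mulVec]
    have h2 : (algebraMap ℂ (Matrix ι ι ℂ)) z *ᵥ v = z • v := by
      simp [Algebra.algebraMap_eq_smul_one, Matrix.smul_mulVec]
    rw [h2, he, sub_self]

section two
variable [Nonempty ι]

/-- the elementwise bound `T^k y ≥ μ^k y` -/
lemma pow_mulVec_ge {T : Matrix ι ι ℝ} (hT : ∀ i j, 0 ≤ T i j)
    {y : ι → ℝ} (hy : ∀ i, 0 ≤ y i) {μ : ℝ} (hμ : 0 ≤ μ)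
    (h : ∀ i, μ * y i ≤ (T *ᵥ y) i) (k : ℕ) : ∀ i, μ ^ k * y i ≤ (T ^ k *ᵥ y) i := by
  induction k with
  | zero => intro i; simp [Matrix.one_mulVec]
  | succ k ih =>
    intro i
    have h1 : T ^ (k+1) *ᵥ y = T *ᵥ (T ^ k *ᵥ y) := by
      rw [Matrix.mulVec_mulVec, ← pow_succ']
    rw [h1]
    have h2 : ∀ j, μ ^ k * y j ≤ (T ^ k *ᵥ y) j := ih
    have h3 : (T *ᵥ fun j => μ ^ k * y j) i ≤ (T *ᵥ (T ^ k *ᵥ y)) i := by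
      unfold Matrix.mulVec dotProduct
      exact Finset.sum_le_sum fun j _ => mul_le_mul_of_nonneg_left (h2 j) (hT i j)
    calc μ ^ (k+1) * y i = μ ^ k * (μ * y i) := by ring
    _ ≤ μ ^ k * (T *ᵥ y) i := by
        exact mul_le_mul_of_nonneg_left (h i) (pow_nonneg hμ k)
    _ = (T *ᵥ fun j => μ ^ k * y j) i := by
        unfold Matrix.mulVec dotProduct
        rw [Finset.mul_sum]; exact Finset.sum_congr rfl fun j _ => by ring
    _ ≤ _ := h3

lemma le_rad_of_subinv {T : Matrix ι ι ℝ} (hT : ∀ i j, 0 ≤ T i j)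
    {y : ι → ℝ} (hy : ∀ i, 0 ≤ y i) (hy0 : y ≠ 0) {μ : ℝ} (hμ : 0 ≤ μ)
    (h : ∀ i, μ * y i ≤ (T *ᵥ y) i) : μ ≤ rad (cx T) := by
  obtain ⟨i₀, hi₀⟩ : ∃ i, 0 < y i := by
    by_contra hc
    push_neg at hc
    exact hy0 (funext fun i => le_antisymm (hc i) (hy i))
  have hynorm : 0 < ‖y‖ := norm_pos_iff.mpr hy0
  set c : ℝ := y i₀ / ‖y‖ with hc
  have hcpos : 0 < c := div_pos hi₀ hynorm
  -- key bound : μ^k * c ≤ ‖cx T ^ k‖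
  have key : ∀ k : ℕ, μ ^ k * c ≤ ‖cx T ^ k‖ := by
    intro k
    have h1 : μ ^ k * y i₀ ≤ (T ^ k *ᵥ y) i₀ := pow_mulVec_ge hT hy hμ h k i₀
    have h2 : (T ^ k *ᵥ y) i₀ ≤ ‖T ^ k *ᵥ y‖ :=
      le_trans (le_abs_self _) (norm_le_pi_norm (T ^ k *ᵥ y) i₀)
    have h3 : ‖T ^ k *ᵥ y‖ ≤ ‖T ^ k‖ * ‖y‖ := Matrix.linfty_opNorm_mulVec _ _
    have h4 : μ ^ k * y i₀ ≤ ‖T ^ k‖ * ‖y‖ := le_trans h1 (le_trans h2 h3)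
    rw [← cx_pow, norm_cx_eq] at *
    rw [hc, ← mul_div_assoc, div_le_iff₀ hynorm]
    linarith
  -- pass to the limit
  have hlim1 : Tendsto (fun k : ℕ => μ * c ^ (1/(k:ℝ))) atTop (𝓝 μ) := by
    have hlogc : Tendsto (fun k : ℕ => Real.log c * (1/(k:ℝ))) atTop (𝓝 0) := by
      simpa using (tendsto_one_div_atTop_nhds_zero_nat).const_mul (Real.log c)
    have hexp : Tendsto (fun k : ℕ => Real.exp (Real.log c * (1/(k:ℝ)))) atTop (𝓝 1) := by
      simpa [Function.comp_def] using (Real.continuous_exp.tendsto 0).comp hlogc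
    have heq : ∀ k : ℕ, c ^ (1/(k:ℝ)) = Real.exp (Real.log c * (1/(k:ℝ))) := by
      intro k; rw [Real.rpow_def_of_pos hcpos]
    simp only [heq]
    simpa using hexp.const_mul μ
  refine le_of_tendsto_of_tendsto hlim1 (gelfand (cx T)) (eventually_atTop.2 ⟨1, fun k hk => ?_⟩)
  · have hkR : (0:ℝ) < k := by exact_mod_cast hk
    have h5 : (μ ^ k * c) ^ (1/(k:ℝ)) ≤ ‖cx T ^ k‖ ^ (1/(k:ℝ)) :=
      Real.rpow_le_rpow (by positivity) (key k) (by positivity)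
    have h6 : (μ ^ k * c) ^ (1/(k:ℝ)) = μ * c ^ (1/(k:ℝ)) := by
      rw [Real.mul_rpow (by positivity) hcpos.le]
      congr 1
      rw [← Real.rpow_natCast μ k, ← Real.rpow_mul hμ]
      rw [mul_one_div, div_self hkR.ne', Real.rpow_one]
    show μ * c ^ (1/(k:ℝ)) ≤ ‖cx T ^ k‖ ^ (1/(k:ℝ))
    rw [← h6]; exact h5

lemma rad_mono {T T' : Matrix ι ι ℝ} (hT : ∀ i j, 0 ≤ T i j)
    (h : ∀ i j, T i j ≤ T' i j) : rad (cx T) ≤ rad (cx T') := by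
  have hpow : ∀ k : ℕ, (∀ i j, 0 ≤ (T^k) i j) ∧ (∀ i j, (T^k) i j ≤ (T'^k) i j) := by
    intro k
    induction k with
    | zero =>
      refine ⟨fun i j => ?_, fun i j => ?_⟩ <;> simp only [pow_zero]
      · rcases eq_or_ne i j with rfl | hn
        · simp [Matrix.one_apply]
        · simp [Matrix.one_apply, hn]
      · exact le_refl _
    | succ k ih =>
      obtain ⟨ih1, ih2⟩ := ih
      constructor <;> intro i j
      · rw [pow_succ, Matrix.mul_apply]
        exact Finset.sum_nonneg fun l _ => mul_nonneg (ih1 i l) (hT l j)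
      · rw [pow_succ, pow_succ, Matrix.mul_apply, Matrix.mul_apply]
        refine Finset.sum_le_sum fun l _ => ?_
        exact mul_le_mul (ih2 i l) (h l j) (hT l j) (le_trans (ih1 i l) (ih2 i l))
  refine le_of_tendsto_of_tendsto' (gelfand (cx T)) (gelfand (cx T')) fun k => ?_
  refine Real.rpow_le_rpow (norm_nonneg _) ?_ (by positivity)
  rw [← cx_pow, ← cx_pow, norm_cx_eq, norm_cx_eq]
  refine norm_le_of_le fun i j => ?_
  rw [abs_of_nonneg ((hpow k).1 i j)]
  exact (hpow k).2 i j

end two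

section three
variable [Nonempty ι]

lemma perron_pos {P : Matrix ι ι ℝ} (hP : ∀ i j, 0 < P i j) :
    ∃ x : ι → ℝ, (∀ i, 0 ≤ x i) ∧ x ≠ 0 ∧ P *ᵥ x = rad (cx P) • x := by
  haveI : Nontrivial (Matrix ι ι ℂ) := by
    refine ⟨0, 1, fun hcon => ?_⟩
    have := congr_fun (congr_fun hcon (Classical.arbitrary ι)) (Classical.arbitrary ι)
    simp [Matrix.one_apply] at this
  obtain ⟨z, hz, hzr⟩ :=
    spectrum.exists_nnnorm_eq_spectralRadius_of_nonempty (a := cx P) (spectrum.nonempty _)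
  have hrad : rad (cx P) = ‖z‖ := by
    rw [rad, ← hzr]
    simp
  obtain ⟨v, hv0, hveq⟩ := (mem_spectrum_iff_eigen (cx P)).mp hz
  set r := rad (cx P) with hr
  set y : ι → ℝ := fun i => ‖v i‖ with hy
  have hy0 : y ≠ 0 := by
    intro hcon
    apply hv0
    funext i
    have h := congr_fun hcon i
    simp only [hy, Pi.zero_apply] at h
    exact norm_eq_zero.mp h
  have hynn : ∀ i, 0 ≤ y i := fun i => norm_nonneg _
  -- subinvariance : r • y ≤ P *ᵥ y entrywise
  have hsub : ∀ i, r * y i ≤ (P *ᵥ y) i := by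
    intro i
    have h1 : (cx P *ᵥ v) i = z * v i := by rw [hveq]; simp
    have h2 : ‖(cx P *ᵥ v) i‖ = r * y i := by
      rw [h1, norm_mul, hrad, hy]
    rw [← h2]
    have h3 : ‖(cx P *ᵥ v) i‖ ≤ ∑ j, P i j * y j := by
      refine le_trans (norm_sum_le _ _) ?_
      refine le_of_eq (Finset.sum_congr rfl fun j _ => ?_)
      simp [cx, hy, abs_of_nonneg (hP i j).le]
    simpa [Matrix.mulVec, dotProduct] using h3
  -- now show equality
  set u : ι → ℝ := fun i => (P *ᵥ y) i - r * y i with hu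
  have hunn : ∀ i, 0 ≤ u i := fun i => sub_nonneg.mpr (hsub i)
  by_cases hu0 : u = 0
  · refine ⟨y, hynn, hy0, funext fun i => ?_⟩
    have := congr_fun hu0 i
    simp only [hu, Pi.zero_apply, sub_eq_zero] at this
    simp only [Pi.smul_apply, smul_eq_mul]
    linarith
  exfalso
  -- w := P *ᵥ y is strictly positive
  set w : ι → ℝ := P *ᵥ y with hw
  have hwpos : ∀ i, 0 < w i := by
    intro i
    obtain ⟨j₀, hj₀⟩ : ∃ j, 0 < y j := by
      by_contra hcon; push_neg at hcon
      exact hy0 (funext fun j => le_antisymm (hcon j) (hynn j))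
    have : 0 < ∑ j, P i j * y j :=
      Finset.sum_pos' (fun j _ => mul_nonneg (hP i j).le (hynn j))
        ⟨j₀, Finset.mem_univ _, mul_pos (hP i j₀) hj₀⟩
    simpa [hw, Matrix.mulVec, dotProduct] using this
  set zz : ι → ℝ := P *ᵥ u with hz2
  have hzpos : ∀ i, 0 < zz i := by
    intro i
    obtain ⟨j₀, hj₀⟩ : ∃ j, 0 < u j := by
      by_contra hcon; push_neg at hcon
      exact hu0 (funext fun j => le_antisymm (hcon j) (hunn j))
    have : 0 < ∑ j, P i j * u j :=
      Finset.sum_pos' (fun j _ => mul_nonneg (hP i j).le (hunn j))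
        ⟨j₀, Finset.mem_univ _, mul_pos (hP i j₀) hj₀⟩
    simpa [hz2, Matrix.mulVec, dotProduct] using this
  -- P *ᵥ w - r • w = P *ᵥ u
  have hu_eq : u = w - r • y := by
    funext i; simp [hu, hw, Pi.sub_apply, Pi.smul_apply, smul_eq_mul]
  have hPu : zz = P *ᵥ w - r • w := by
    rw [hz2, hu_eq, Matrix.mulVec_sub, Matrix.mulVec_smul, hw]
  obtain ⟨i₁, -, hmin⟩ := Finset.exists_min_image Finset.univ (fun i => zz i / w i)
    ⟨Classical.arbitrary ι, Finset.mem_univ _⟩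
  set δ : ℝ := zz i₁ / w i₁ with hδ
  have hδpos : 0 < δ := div_pos (hzpos i₁) (hwpos i₁)
  have hsub2 : ∀ i, (r + δ) * w i ≤ (P *ᵥ w) i := by
    intro i
    have h1 : δ ≤ zz i / w i := hmin i (Finset.mem_univ i)
    have h2 : δ * w i ≤ zz i := by
      rw [← le_div_iff₀ (hwpos i)]
      rw [div_eq_mul_inv, mul_comm] at h1 ⊢
      exact h1
    have h3 : zz i = (P *ᵥ w) i - r * w i := by
      have := congr_fun hPu i
      simpa [Pi.sub_apply, Pi.smul_apply, smul_eq_mul] using this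
    rw [h3] at h2
    linarith
  have hw0 : w ≠ 0 := fun hcon => (hwpos (Classical.arbitrary ι)).ne'
    (congr_fun hcon (Classical.arbitrary ι))
  have hfin := le_rad_of_subinv (fun i j => (hP i j).le) (fun i => (hwpos i).le) hw0
    (by have := rad_nonneg (cx P); linarith) hsub2
  rw [← hr] at hfin
  linarith

lemma perron {T : Matrix ι ι ℝ} (hT : ∀ i j, 0 ≤ T i j) :
    ∃ x : ι → ℝ, (∀ i, 0 ≤ x i) ∧ x ≠ 0 ∧ T *ᵥ x = rad (cx T) • x := by
  classical
  set r := rad (cx T) with hr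
  set E : Matrix ι ι ℝ := Matrix.of (fun _ _ => (1:ℝ)) with hE
  set Tk : ℕ → Matrix ι ι ℝ := fun k => T + (1/(k+1) : ℝ) • E with hTk
  have hTkpos : ∀ k, ∀ i j, 0 < Tk k i j := by
    intro k i j
    have h1 : (0:ℝ) < 1/(k+1) := by positivity
    have : Tk k i j = T i j + 1/(k+1) := by
      simp [hTk, hE, Matrix.add_apply, Matrix.smul_apply, smul_eq_mul]
    rw [this]
    have := hT i j
    linarith
  -- eigenvectors for each k
  have hex : ∀ k : ℕ, ∃ x : ι → ℝ, (∀ i, 0 ≤ x i) ∧ ‖x‖ = 1 ∧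
      Tk k *ᵥ x = rad (cx (Tk k)) • x := by
    intro k
    obtain ⟨x, hx1, hx2, hx3⟩ := perron_pos (hTkpos k)
    have hxn : 0 < ‖x‖ := norm_pos_iff.mpr hx2
    refine ⟨(‖x‖)⁻¹ • x, fun i => ?_, ?_, ?_⟩
    · exact mul_nonneg (by positivity) (hx1 i)
    · rw [norm_smul]
      simp [abs_of_pos (inv_pos.mpr hxn), inv_mul_cancel₀ hxn.ne']
    · rw [Matrix.mulVec_smul, hx3, smul_comm]
  choose xs hxs1 hxs2 hxs3 using hex
  set rs : ℕ → ℝ := fun k => rad (cx (Tk k)) with hrs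
  have hrs_ge : ∀ k, r ≤ rs k := by
    intro k
    refine rad_mono hT fun i j => ?_
    have h1 : (0:ℝ) ≤ 1/(k+1) := by positivity
    have : Tk k i j = T i j + 1/(k+1) := by
      simp [hTk, hE, Matrix.add_apply, Matrix.smul_apply, smul_eq_mul]
    rw [this]; linarith
  have hrs_le : ∀ k, rs k ≤ ‖T‖ + ‖E‖ := by
    intro k
    have h0 : rs k ≤ ‖Tk k‖ := by
      have h1 := rad_le_norm (cx (Tk k))
      rw [norm_cx_eq] at h1
      exact h1
    refine le_trans h0 ?_
    have htk : Tk k = T + (1/(k+1):ℝ) • E := rfl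
    rw [htk]
    refine le_trans (norm_add_le _ _) ?_
    have : ‖(1/(k+1) : ℝ) • E‖ ≤ ‖E‖ := by
      rw [norm_smul]
      have h1 : |(1/(k+1) : ℝ)| ≤ 1 := by
        rw [abs_of_pos (by positivity)]
        rw [div_le_one (by positivity)]
        have : (0:ℝ) ≤ k := Nat.cast_nonneg k
        linarith
      calc |(1/(k+1) : ℝ)| * ‖E‖ ≤ 1 * ‖E‖ :=
            mul_le_mul_of_nonneg_right h1 (norm_nonneg _)
      _ = ‖E‖ := one_mul _
    linarith
  -- compactness
  set S : Set ((ι → ℝ) × ℝ) := (Metric.sphere (0 : ι → ℝ) 1) ×ˢ (Set.Icc r (‖T‖ + ‖E‖)) with hS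
  have hScompact : IsCompact S := (isCompact_sphere _ _).prod isCompact_Icc
  have hmem : ∀ k, (xs k, rs k) ∈ S := by
    intro k
    constructor
    · simp [mem_sphere_iff_norm, hxs2 k]
    · exact ⟨hrs_ge k, hrs_le k⟩
  obtain ⟨⟨x, ρ⟩, hxρS, φ, hφ, hconv⟩ := hScompact.tendsto_subseq hmem
  have hconvx : Tendsto (fun j => xs (φ j)) atTop (𝓝 x) :=
    (continuous_fst.tendsto _).comp hconv
  have hconvr : Tendsto (fun j => rs (φ j)) atTop (𝓝 ρ) :=
    (continuous_snd.tendsto _).comp hconv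
  -- limit equation
  have heig : T *ᵥ x = ρ • x := by
    have hTmul : Tendsto (fun j => T *ᵥ xs (φ j)) atTop (𝓝 (T *ᵥ x)) := by
      have hcont : Continuous (fun v : ι → ℝ => T *ᵥ v) := by
        have := LinearMap.continuous_of_finiteDimensional (Matrix.mulVecLin T)
        exact this
      exact (hcont.tendsto x).comp hconvx
    have hEmul : Tendsto (fun j => E *ᵥ xs (φ j)) atTop (𝓝 (E *ᵥ x)) := by
      have hcont : Continuous (fun v : ι → ℝ => E *ᵥ v) := by
        have := LinearMap.continuous_of_finiteDimensional (Matrix.mulVecLin E)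
        exact this
      exact (hcont.tendsto x).comp hconvx
    have hεlim : Tendsto (fun j : ℕ => (1/((φ j : ℝ)+1))) atTop (𝓝 0) := by
      refine tendsto_of_tendsto_of_tendsto_of_le_of_le
        (tendsto_const_nhds (x := (0:ℝ)))
        (tendsto_one_div_atTop_nhds_zero_nat.comp (tendsto_add_atTop_nat 1)) ?_ ?_
      · intro j; positivity
      · intro j
        show (1/((φ j : ℝ)+1)) ≤ 1/(((j+1 : ℕ)):ℝ)
        have hcast : (((j+1 : ℕ)):ℝ) = (j:ℝ) + 1 := by push_cast; ring
        rw [hcast]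
        have h1 : (j:ℝ) + 1 ≤ (φ j : ℝ) + 1 := by
          have : (j:ℝ) ≤ (φ j : ℝ) := by exact_mod_cast hφ.le_apply
          linarith
        have h2 : (0:ℝ) < (j:ℝ) + 1 := by positivity
        exact one_div_le_one_div_of_le h2 h1
    have hLHS : Tendsto (fun j => Tk (φ j) *ᵥ xs (φ j)) atTop (𝓝 (T *ᵥ x)) := by
      have : ∀ j, Tk (φ j) *ᵥ xs (φ j)
          = T *ᵥ xs (φ j) + (1/((φ j : ℝ)+1)) • (E *ᵥ xs (φ j)) := by
        intro j
        rw [hTk]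
        simp [Matrix.add_mulVec, Matrix.smul_mulVec]
      simp only [this]
      have h0 : Tendsto (fun j => (1/((φ j : ℝ)+1)) • (E *ᵥ xs (φ j))) atTop
          (𝓝 ((0:ℝ) • (E *ᵥ x))) := hεlim.smul hEmul
      simpa using hTmul.add h0
    have hRHS : Tendsto (fun j => rs (φ j) • xs (φ j)) atTop (𝓝 (ρ • x)) :=
      hconvr.smul hconvx
    have : ∀ j, Tk (φ j) *ᵥ xs (φ j) = rs (φ j) • xs (φ j) := fun j => hxs3 (φ j)
    simp only [this] at hLHS
    exact tendsto_nhds_unique hLHS hRHS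
  -- x is a unit vector, nonnegative
  have hxnorm : ‖x‖ = 1 := by
    have := hxρS.1
    simpa [mem_sphere_iff_norm] using this
  have hx0 : x ≠ 0 := by
    intro hcon
    rw [hcon] at hxnorm
    simp at hxnorm
  have hxnn : ∀ i, 0 ≤ x i := by
    intro i
    have hco : Tendsto (fun j => xs (φ j) i) atTop (𝓝 (x i)) :=
      ((continuous_apply i).tendsto x).comp hconvx
    exact ge_of_tendsto hco (Eventually.of_forall fun j => hxs1 (φ j) i)
  -- ρ ≥ r
  have hρ_ge : r ≤ ρ := ge_of_tendsto hconvr (Eventually.of_forall fun j => hrs_ge (φ j))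
  -- ρ ≤ r since ρ is an eigenvalue of T
  have hρ_le : ρ ≤ r := by
    have hmem : (ρ : ℂ) ∈ spectrum ℂ (cx T) := by
      rw [mem_spectrum_iff_eigen]
      refine ⟨fun i => (x i : ℂ), ?_, ?_⟩
      · intro hcon
        apply hx0
        funext i
        have := congr_fun hcon i
        simpa using this
      · funext i
        have h1 : (T *ᵥ x) i = ρ * x i := by rw [heig]; simp
        have h2 : ((cx T) *ᵥ fun i => (x i : ℂ)) i = ((T *ᵥ x) i : ℂ) := by
          simp only [cx, Matrix.mulVec, dotProduct, Matrix.map_apply]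
          push_cast
          rfl
        rw [h2, h1]
        push_cast
        simp
    have := abs_le_rad hmem
    rw [← hr] at this
    refine le_trans ?_ this
    rw [Complex.norm_real, Real.norm_eq_abs]
    exact le_abs_self ρ
  have hρr : ρ = r := le_antisymm hρ_le hρ_ge
  exact ⟨x, hxnn, hx0, by rw [heig, hρr]⟩

end three

lemma specRad_lt_one_of_forall (M : Matrix ι ι ℝ)
    (h : ∀ z ∈ spectrum ℂ (M.map Complex.ofReal), ‖z‖ < 1) : specRad M < 1 := by
  rw [specRad]
  rcases (spectrum ℂ (M.map Complex.ofReal)).eq_empty_or_nonempty with he | hne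
  · rw [he]
    simp [Real.sSup_empty]
  · have hK : IsCompact ((fun z : ℂ => ‖z‖) '' spectrum ℂ (M.map Complex.ofReal)) :=
      (spectrum.isCompact _).image continuous_norm
    obtain ⟨z, hz, hzz⟩ := hK.sSup_mem (hne.image _)
    rw [← hzz]
    exact h z hz

end TGADSaux

open TGADSaux

theorem tgads_convergence_weak {m n : ℕ}
    (A P₁ R₁ S₁ P₂ R₂ S₂ : Matrix (Fin m) (Fin n) ℝ)
    (X₁ X₂ Xhat : Matrix (Fin n) (Fin m) ℝ)
    (hX₁ : IsMP P₁ X₁)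
    (hX₂ : IsMP P₂ X₂)
    (hsplit₁ : A = P₁ - R₁ + S₁)
    (hrange₁ : LinearMap.range (P₁).mulVecLin = LinearMap.range (A).mulVecLin)
    (hker₁ : LinearMap.ker (P₁).mulVecLin = LinearMap.ker (A).mulVecLin)
    (hw₁a : MatLE 0 (X₁ * R₁))
    (hw₁b : MatLE (X₁ * S₁) 0)
    (hsplit₂ : A = P₂ - R₂ + S₂)
    (hrange₂ : LinearMap.range (P₂).mulVecLin = LinearMap.range (A).mulVecLin)
    (hker₂ : LinearMap.ker (P₂).mulVecLin = LinearMap.ker (A).mulVecLin)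
    (hw₂a : MatLE 0 (X₂ * R₂))
    (hw₂b : MatLE (X₂ * S₂) 0)
    (hNS : LinearMap.ker (P₂).mulVecLin ≤ LinearMap.ker (S₂).mulVecLin)
    (hRS : LinearMap.range (S₂).mulVecLin ≤ LinearMap.range (P₂).mulVecLin)
    (hunit : IsUnit (1 - S₂ * X₁))
    (hXhat : IsMP ((1 - S₂ * X₁) * A) Xhat)
    (hXhatP : MatLE 0 (Xhat * P₂))
    : specRad (Matrix.fromBlocks (X₂ * R₂ - X₂ * S₂ * X₁ * R₁) (X₂ * S₂ * X₁ * S₁) 1 0) < 1 := by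
  classical
  set H : Matrix (Fin n) (Fin n) ℝ := X₂ * R₂ - X₂ * S₂ * X₁ * R₁ with hH
  set K : Matrix (Fin n) (Fin n) ℝ := X₂ * S₂ * X₁ * S₁ with hK
  -- entrywise nonnegativity of H and K
  have hXSn : ∀ i j, (X₂ * S₂) i j ≤ 0 := by
    intro i j; simpa using hw₂b i j
  have hXRn : ∀ i j, 0 ≤ (X₂ * R₂) i j := by
    intro i j; simpa using hw₂a i j
  have hX₁Rn : ∀ i j, 0 ≤ (X₁ * R₁) i j := by
    intro i j; simpa using hw₁a i j
  have hX₁Sn : ∀ i j, (X₁ * S₁) i j ≤ 0 := by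
    intro i j; simpa using hw₁b i j
  have hassocH : X₂ * S₂ * X₁ * R₁ = (X₂ * S₂) * (X₁ * R₁) := by
    rw [Matrix.mul_assoc (X₂ * S₂) X₁ R₁]
  have hassocK : X₂ * S₂ * X₁ * S₁ = (X₂ * S₂) * (X₁ * S₁) := by
    rw [Matrix.mul_assoc (X₂ * S₂) X₁ S₁]
  have hHn : ∀ i j, 0 ≤ H i j := by
    intro i j
    have h2 : ((X₂ * S₂) * (X₁ * R₁)) i j ≤ 0 := by
      rw [Matrix.mul_apply]
      exact Finset.sum_nonpos fun k _ =>
        mul_nonpos_iff.mpr (Or.inr ⟨hXSn i k, hX₁Rn k j⟩)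
    have : H i j = (X₂ * R₂) i j - ((X₂ * S₂) * (X₁ * R₁)) i j := by
      rw [hH, hassocH, Matrix.sub_apply]
    rw [this]
    have := hXRn i j
    linarith
  have hKn : ∀ i j, 0 ≤ K i j := by
    intro i j
    rw [hK, hassocK, Matrix.mul_apply]
    refine Finset.sum_nonneg fun k _ => ?_
    have h1 := hXSn i k
    have h2 := hX₁Sn k j
    nlinarith
  have hTn : ∀ i j, 0 ≤ (H + K) i j := by
    intro i j
    rw [Matrix.add_apply]
    exact add_nonneg (hHn i j) (hKn i j)
  -- reduce to: all complex eigenvalues of the block matrix have modulus < 1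
  apply specRad_lt_one_of_forall
  intro z hz
  by_contra hzc
  push_neg at hzc  -- 1 ≤ ‖z‖
  have hzpos : 0 < ‖z‖ := lt_of_lt_of_le one_pos hzc
  -- the complexified block matrix
  have hWc : (Matrix.fromBlocks H K 1 0).map Complex.ofReal
      = Matrix.fromBlocks (cx H) (cx K) (1 : Matrix (Fin n) (Fin n) ℂ)
        (0 : Matrix (Fin n) (Fin n) ℂ) := by
    rw [Matrix.fromBlocks_map,
      Matrix.map_one _ Complex.ofReal_zero Complex.ofReal_one,
      Matrix.map_zero _ Complex.ofReal_zero]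
    rfl
  rw [hWc] at hz
  obtain ⟨v, hv0, hveq⟩ := (mem_spectrum_iff_eigen _).mp hz
  -- blocks of the eigenvector
  set v₁ : Fin n → ℂ := v ∘ Sum.inl with hv₁
  set v₂ : Fin n → ℂ := v ∘ Sum.inr with hv₂
  have hverw : Matrix.fromBlocks (cx H) (cx K) 1 0 *ᵥ v
      = Sum.elim (cx H *ᵥ v₁ + cx K *ᵥ v₂) ((1 : Matrix (Fin n) (Fin n) ℂ) *ᵥ v₁ + 0 *ᵥ v₂) :=
    Matrix.fromBlocks_mulVec _ _ _ _ v
  have hrow1 : ∀ i, (cx H *ᵥ v₁) i + (cx K *ᵥ v₂) i = z * v₁ i := by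
    intro i
    have := congr_fun hveq (Sum.inl i)
    rw [hverw] at this
    simpa [hv₁] using this
  have hrow2 : ∀ i, v₁ i = z * v₂ i := by
    intro i
    have := congr_fun hveq (Sum.inr i)
    rw [hverw] at this
    simpa [Matrix.one_mulVec, Matrix.zero_mulVec, hv₁, hv₂] using this
  have hn0 : Nonempty (Fin n) := by
    by_contra hcon
    rw [not_nonempty_iff] at hcon
    apply hv0
    funext i
    cases i with
    | inl a => exact (hcon.false a).elim
    | inr a => exact (hcon.false a).elim
  have hv₂0 : v₂ ≠ 0 := by
    intro hcon
    apply hv0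
    funext i
    cases i with
    | inl a =>
      have h1 := hrow2 a
      have h2 : v₂ a = 0 := congr_fun hcon a
      show v₁ a = 0
      rw [h1, h2, mul_zero]
    | inr a => exact congr_fun hcon a
  set y : Fin n → ℝ := fun i => ‖v₂ i‖ with hy
  have hynn : ∀ i, 0 ≤ y i := fun i => norm_nonneg _
  have hy0 : y ≠ 0 := by
    intro hcon
    apply hv₂0
    funext i
    exact norm_eq_zero.mp (congr_fun hcon i)
  -- subinvariance : |z| y ≤ (H+K) y
  have hsub : ∀ i, ‖z‖ * y i ≤ ((H + K) *ᵥ y) i := by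
    intro i
    -- z^2 v₂ i = Σ_j ((H i j) z + K i j) v₂ j
    have h1 : z * (z * v₂ i) = ∑ j, ((H i j : ℂ) * z + (K i j : ℂ)) * v₂ j := by
      have h2 := hrow1 i
      rw [hrow2 i] at h2
      rw [← h2]
      have h3 : (cx H *ᵥ v₁) i = ∑ j, (H i j : ℂ) * (z * v₂ j) := by
        simp only [Matrix.mulVec, dotProduct, cx, Matrix.map_apply]
        exact Finset.sum_congr rfl fun j _ => by rw [hrow2 j]
      have h4 : (cx K *ᵥ v₂) i = ∑ j, (K i j : ℂ) * v₂ j := by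
        simp only [Matrix.mulVec, dotProduct, cx, Matrix.map_apply]
      rw [h3, h4, ← Finset.sum_add_distrib]
      exact Finset.sum_congr rfl fun j _ => by ring
    have h5 : ‖z‖ * (‖z‖ * y i) ≤
        ∑ j, (H i j * ‖z‖ + K i j) * y j := by
      calc ‖z‖ * (‖z‖ * y i)
          = ‖z * (z * v₂ i)‖ := by
            rw [norm_mul, norm_mul]
      _ = ‖∑ j, ((H i j : ℂ) * z + (K i j : ℂ)) * v₂ j‖ := by rw [h1]
      _ ≤ ∑ j, ‖((H i j : ℂ) * z + (K i j : ℂ)) * v₂ j‖ :=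
            norm_sum_le _ _
      _ ≤ ∑ j, (H i j * ‖z‖ + K i j) * y j := by
            refine Finset.sum_le_sum fun j _ => ?_
            rw [norm_mul]
            refine mul_le_mul_of_nonneg_right ?_ (hynn j)
            refine le_trans (norm_add_le _ _) ?_
            rw [norm_mul, Complex.norm_real, Complex.norm_real, Real.norm_eq_abs, Real.norm_eq_abs,
              abs_of_nonneg (hHn i j), abs_of_nonneg (hKn i j)]
    have h6 : ∑ j, (H i j * ‖z‖ + K i j) * y j
        ≤ ‖z‖ * ((H + K) *ᵥ y) i := by
      rw [Matrix.mulVec, dotProduct, Finset.mul_sum]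
      refine Finset.sum_le_sum fun j _ => ?_
      rw [Matrix.add_apply]
      have hKy : K i j * y j ≤ ‖z‖ * (K i j * y j) := by
        nlinarith [mul_nonneg (hKn i j) (hynn j)]
      nlinarith [mul_nonneg (hHn i j) (hynn j), mul_nonneg (hKn i j) (hynn j)]
    have h7 := le_trans h5 h6
    exact (mul_le_mul_iff_right₀ hzpos).mp h7
  -- hence 1 ≤ r where r is the spectral radius of H+K
  set r : ℝ := rad (cx (H + K)) with hr
  have h1r : 1 ≤ r :=
    le_trans hzc (le_rad_of_subinv hTn hynn hy0 (norm_nonneg z) hsub)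
  have hr0 : r ≠ 0 := by intro hcon; rw [hcon] at h1r; linarith
  -- Perron eigenvector
  obtain ⟨x, hxnn, hx0, heig⟩ := perron hTn
  rw [← hr] at heig
  -- ============ Moore-Penrose algebra ============
  set Ahat : Matrix (Fin m) (Fin n) ℝ := (1 - S₂ * X₁) * A with hAhat
  set Rhat : Matrix (Fin m) (Fin n) ℝ := P₂ - Ahat with hRhat
  -- (a)  S₂ * X₁ * P₁ = S₂
  have hSXP : S₂ * X₁ * P₁ = S₂ := by
    set D : Matrix (Fin n) (Fin n) ℝ := X₁ * P₁ - 1 with hD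
    have hPD : P₁ * D = 0 := by
      rw [hD, Matrix.mul_sub, Matrix.mul_one, ← Matrix.mul_assoc, hX₁.1, sub_self]
    have hSD : S₂ * D = 0 := by
      ext i j
      set d : Fin n → ℝ := fun k => D k j with hd
      have hdP : P₁ *ᵥ d = 0 := by
        funext i'
        have : (P₁ *ᵥ d) i' = (P₁ * D) i' j := by
          rw [Matrix.mul_apply, Matrix.mulVec, dotProduct]
        rw [this, hPD]
        rfl
      have hmem : d ∈ LinearMap.ker (P₁).mulVecLin := by
        rw [LinearMap.mem_ker, Matrix.mulVecLin_apply]; exact hdP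
      rw [hker₁, ← hker₂] at hmem
      have hmem2 : d ∈ LinearMap.ker (S₂).mulVecLin := hNS hmem
      rw [LinearMap.mem_ker, Matrix.mulVecLin_apply] at hmem2
      have : (S₂ * D) i j = (S₂ *ᵥ d) i := by
        rw [Matrix.mul_apply, Matrix.mulVec, dotProduct]
      rw [this, hmem2]
      rfl
    have := hSD
    rw [hD, Matrix.mul_sub, Matrix.mul_one, sub_eq_zero, ← Matrix.mul_assoc] at this
    exact this
  -- (b)  H + K = X₂ * Rhat
  have hYP : X₂ * S₂ * X₁ * P₁ = X₂ * S₂ := by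
    rw [Matrix.mul_assoc X₂ S₂ X₁, Matrix.mul_assoc X₂ (S₂ * X₁) P₁, hSXP]
  have hPA : P₂ - A = R₂ - S₂ := by rw [hsplit₂]; abel
  have key1 : X₂ * S₂ * X₁ * R₁ = X₂ * S₂ - X₂ * S₂ * X₁ * A + X₂ * S₂ * X₁ * S₁ := by
    have hR₁ : R₁ = P₁ - A + S₁ := by rw [hsplit₁]; abel
    rw [hR₁, Matrix.mul_add, Matrix.mul_sub, hYP]
  have key2 : X₂ * Rhat = X₂ * P₂ - X₂ * A + X₂ * S₂ * X₁ * A := by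
    rw [hRhat, hAhat, Matrix.sub_mul, Matrix.one_mul, Matrix.mul_sub, Matrix.mul_sub,
      ← Matrix.mul_assoc, ← Matrix.mul_assoc]
    abel
  have key3 : X₂ * P₂ - X₂ * A = X₂ * R₂ - X₂ * S₂ := by
    rw [← Matrix.mul_sub, hPA, Matrix.mul_sub]
  have hTR : H + K = X₂ * Rhat := by
    rw [hH, hK, key1, key2, key3]
    abel
  -- (c)  X₂ *ᵥ (P₂ *ᵥ x) = x
  have hXRx : (X₂ * Rhat) *ᵥ x = r • x := by rw [← hTR, heig]
  have hXPX : (X₂ * P₂) * (X₂ * Rhat) = X₂ * Rhat := by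
    rw [← Matrix.mul_assoc, hX₂.2.1]
  have hxP : (X₂ * P₂) *ᵥ x = x := by
    have h1 : (X₂ * P₂) *ᵥ (r • x) = r • x := by
      rw [← hXRx, Matrix.mulVec_mulVec, hXPX, hXRx]
    rw [Matrix.mulVec_smul] at h1
    have h2 : r • ((X₂ * P₂) *ᵥ x) = r • x := by rw [h1]
    exact smul_right_injective _ hr0 h2
  -- (d)  Ahat *ᵥ x ∈ range P₂
  have hAx_mem : Ahat *ᵥ x ∈ LinearMap.range (P₂).mulVecLin := by
    have h1 : Ahat *ᵥ x = A *ᵥ x - S₂ *ᵥ ((X₁ * A) *ᵥ x) := by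
      rw [hAhat, Matrix.sub_mul, Matrix.one_mul, Matrix.sub_mulVec,
        Matrix.mulVec_mulVec, ← Matrix.mul_assoc]
    rw [h1]
    refine sub_mem ?_ ?_
    · rw [hrange₂]
      exact ⟨x, rfl⟩
    · exact hRS ⟨(X₁ * A) *ᵥ x, rfl⟩
  obtain ⟨u₀, hu₀⟩ := hAx_mem
  rw [Matrix.mulVecLin_apply] at hu₀
  -- (e)  Ahat *ᵥ x = (1 - r) • (P₂ *ᵥ x)
  have hXA : X₂ *ᵥ (Ahat *ᵥ x) = (1 - r) • x := by
    have h1 : Ahat = P₂ - Rhat := by rw [hRhat]; abel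
    rw [h1, Matrix.sub_mulVec, Matrix.mulVec_sub, Matrix.mulVec_mulVec, hxP,
      Matrix.mulVec_mulVec, hXRx, sub_smul, one_smul]
  have hAx : Ahat *ᵥ x = (1 - r) • (P₂ *ᵥ x) := by
    have h1 : P₂ *ᵥ (X₂ *ᵥ (Ahat *ᵥ x)) = Ahat *ᵥ x := by
      rw [← hu₀, Matrix.mulVec_mulVec, Matrix.mulVec_mulVec, hX₂.1]
    rw [hXA, Matrix.mulVec_smul] at h1
    rw [← h1]
  -- (f)  (Xhat * Ahat) *ᵥ x = x
  set Q : Matrix (Fin n) (Fin n) ℝ := Xhat * Ahat with hQ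
  have hQQ : Q * Q = Q := by
    rw [hQ, Matrix.mul_assoc Xhat Ahat (Xhat * Ahat), ← Matrix.mul_assoc Ahat Xhat Ahat]
    rw [hAhat, hXhat.1]
  have hQsymm : Qᵀ = Q := by rw [hQ, hAhat]; exact hXhat.2.2.2
  set uu : Fin n → ℝ := x - Q *ᵥ x with huu
  have hQu : Q *ᵥ uu = 0 := by
    rw [huu, Matrix.mulVec_sub, Matrix.mulVec_mulVec, hQQ, sub_self]
  have hAu : Ahat *ᵥ uu = 0 := by
    have h1 : Ahat *ᵥ uu = Ahat *ᵥ (Q *ᵥ uu) := by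
      rw [Matrix.mulVec_mulVec, hQ, ← Matrix.mul_assoc, hAhat, hXhat.1]
    rw [h1, hQu, Matrix.mulVec_zero]
  have hAuu : A *ᵥ uu = 0 := by
    obtain ⟨B, hB1, hB2⟩ := isUnit_iff_exists.mp hunit
    have h1 : A *ᵥ uu = B *ᵥ (Ahat *ᵥ uu) := by
      rw [Matrix.mulVec_mulVec, hAhat, ← Matrix.mul_assoc, hB2, Matrix.one_mul]
    rw [h1, hAu, Matrix.mulVec_zero]
  have hPu : P₂ *ᵥ uu = 0 := by
    have hmem : uu ∈ LinearMap.ker (A).mulVecLin := by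
      rw [LinearMap.mem_ker, Matrix.mulVecLin_apply]; exact hAuu
    rw [← hker₂] at hmem
    rw [LinearMap.mem_ker, Matrix.mulVecLin_apply] at hmem
    exact hmem
  -- uu = 0 via inner product
  have hxu : x ⬝ᵥ uu = 0 := by
    have h1 : x ⬝ᵥ uu = ((X₂ * P₂) *ᵥ x) ⬝ᵥ uu := by rw [hxP]
    rw [h1, dotProduct_comm, Matrix.dotProduct_mulVec, ← Matrix.mulVec_transpose,
      hX₂.2.2.2, ← Matrix.mulVec_mulVec, hPu, Matrix.mulVec_zero, zero_dotProduct]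
  have hQxu : (Q *ᵥ x) ⬝ᵥ uu = 0 := by
    rw [dotProduct_comm, Matrix.dotProduct_mulVec, ← Matrix.mulVec_transpose,
      hQsymm, hQu, zero_dotProduct]
  have huu0 : uu = 0 := by
    have h1 : uu ⬝ᵥ uu = 0 := by
      rw [huu, sub_dotProduct, hxu, hQxu, sub_self]
    funext i
    have h2 : ∀ j ∈ Finset.univ, 0 ≤ uu j * uu j := fun j _ => mul_self_nonneg _
    have h3 : ∀ j ∈ Finset.univ, uu j * uu j = 0 :=
      (Finset.sum_eq_zero_iff_of_nonneg h2).mp h1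
    exact mul_self_eq_zero.mp (h3 i (Finset.mem_univ i))
  have hQx : Q *ᵥ x = x := by
    have := huu0
    rw [huu, sub_eq_zero] at this
    exact this.symm
  -- (g)  conclusion
  have hfin : ∀ i, x i = (1 - r) * ((Xhat * P₂) *ᵥ x) i := by
    have h2 : Q *ᵥ x = (1 - r) • ((Xhat * P₂) *ᵥ x) := by
      rw [hQ, ← Matrix.mulVec_mulVec, hAx, Matrix.mulVec_smul, Matrix.mulVec_mulVec]
    intro i
    have h3 := congr_fun (hQx.symm.trans h2) i
    simpa [Pi.smul_apply, smul_eq_mul] using h3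
  have hwnn : ∀ i, 0 ≤ ((Xhat * P₂) *ᵥ x) i := by
    intro i
    rw [Matrix.mulVec, dotProduct]
    refine Finset.sum_nonneg fun j _ => mul_nonneg ?_ (hxnn j)
    simpa using hXhatP i j
  apply hx0
  funext i
  have h2 : x i ≤ 0 := by
    rw [hfin i]
    exact mul_nonpos_iff.mpr (Or.inr ⟨by linarith, hwnn i⟩)
  exact le_antisymm h2 (hxnn i)
end

section
/- Let A = P₁ − R₁ + S₁ = P₂ − R₂ + S₂ be two double proper weak regular splittings of A ∈ ℝ^{m×n} such that N(R₂) ⊇ N(P₂), R(R₂) ⊆ R(P₂), I + R₂P₁† is nonsingular, and 𝒜̂† ≥ 0 where 𝒜̂ = (I + R₂P₁†)A. Then ρ(𝒲₁₂) < 1. -/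
open Matrix

namespace HTADSAux

/-- Two matrices are equal if they agree as linear maps on all vectors. -/
lemma matrix_ext_mulVec {p q : ℕ} {M N : Matrix (Fin p) (Fin q) ℝ}
    (h : ∀ v, M.mulVec v = N.mulVec v) : M = N := by
  ext i j
  have h1 := congrFun (h (Pi.single j 1)) i
  simpa [Matrix.mulVec_single] using h1

lemma entry_mul_nonneg {p q r : ℕ} {M : Matrix (Fin p) (Fin q) ℝ} {N : Matrix (Fin q) (Fin r) ℝ}
    (hM : ∀ i j, 0 ≤ M i j) (hN : ∀ i j, 0 ≤ N i j) : ∀ i j, 0 ≤ (M * N) i j := by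
  intro i j
  rw [Matrix.mul_apply]
  exact Finset.sum_nonneg fun k _ => mul_nonneg (hM i k) (hN k j)

lemma entry_mul_nonpos {p q r : ℕ} {M : Matrix (Fin p) (Fin q) ℝ} {N : Matrix (Fin q) (Fin r) ℝ}
    (hM : ∀ i j, 0 ≤ M i j) (hN : ∀ i j, N i j ≤ 0) : ∀ i j, (M * N) i j ≤ 0 := by
  intro i j
  rw [Matrix.mul_apply]
  exact Finset.sum_nonpos fun k _ => mul_nonpos_of_nonneg_of_nonpos (hM i k) (hN k j)

lemma entry_mul_le {p q r : ℕ} {M : Matrix (Fin p) (Fin q) ℝ} {N₁ N₂ : Matrix (Fin q) (Fin r) ℝ}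
    (hM : ∀ i j, 0 ≤ M i j) (h : ∀ i j, N₁ i j ≤ N₂ i j) : ∀ i j, (M * N₁) i j ≤ (M * N₂) i j := by
  intro i j
  rw [Matrix.mul_apply, Matrix.mul_apply]
  exact Finset.sum_le_sum fun k _ => mul_le_mul_of_nonneg_left (h k j) (hM i k)

/-- The absorption lemma: if `P * X * P = P` and every column of `M` lies in the
column space of `P`, then `P * X * M = M`. -/
lemma absorb {p q r : ℕ} (P : Matrix (Fin p) (Fin q) ℝ) (X : Matrix (Fin q) (Fin p) ℝ)
    (M : Matrix (Fin p) (Fin r) ℝ) (hPXP : P * X * P = P)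
    (hr : ∀ v : Fin r → ℝ, ∃ y, P.mulVec y = M.mulVec v) : P * X * M = M := by
  apply matrix_ext_mulVec
  intro v
  obtain ⟨y, hy⟩ := hr v
  calc (P * X * M).mulVec v = (P * X).mulVec (M.mulVec v) := by
        rw [Matrix.mulVec_mulVec]
  _ = (P * X).mulVec (P.mulVec y) := by rw [hy]
  _ = (P * X * P).mulVec y := by rw [Matrix.mulVec_mulVec]
  _ = P.mulVec y := by rw [hPXP]
  _ = M.mulVec v := hy

/-- Kernel absorption: if `P * K = P` and `ker P ⊆ ker M` then `M * K = M`. -/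
lemma ker_absorb {p p' q : ℕ} (P : Matrix (Fin p) (Fin q) ℝ) (M : Matrix (Fin p') (Fin q) ℝ)
    (K : Matrix (Fin q) (Fin q) ℝ) (hPK : P * K = P)
    (hker : ∀ v : Fin q → ℝ, P.mulVec v = 0 → M.mulVec v = 0) : M * K = M := by
  apply matrix_ext_mulVec
  intro v
  have h0 : P.mulVec (K.mulVec v - v) = 0 := by
    rw [Matrix.mulVec_sub, Matrix.mulVec_mulVec, hPK, sub_self]
  have h1 := hker _ h0
  rw [Matrix.mulVec_sub, sub_eq_zero] at h1
  rw [← Matrix.mulVec_mulVec] at *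
  exact h1


lemma entry_mul_nonneg' {p q r : ℕ} {M : Matrix (Fin p) (Fin q) ℝ} {N : Matrix (Fin q) (Fin r) ℝ}
    (hM : ∀ i j, 0 ≤ M i j) (hN : ∀ i j, 0 ≤ N i j) : ∀ i j, 0 ≤ (M * N) i j := by
  intro i j
  rw [Matrix.mul_apply]
  exact Finset.sum_nonneg fun k _ => mul_nonneg (hM i k) (hN k j)

lemma entry_mul_le' {p q r : ℕ} {M : Matrix (Fin p) (Fin q) ℝ} {N₁ N₂ : Matrix (Fin q) (Fin r) ℝ}
    (hM : ∀ i j, 0 ≤ M i j) (h : ∀ i j, N₁ i j ≤ N₂ i j) : ∀ i j, (M * N₁) i j ≤ (M * N₂) i j := by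
  intro i j
  rw [Matrix.mul_apply, Matrix.mul_apply]
  exact Finset.sum_le_sum fun k _ => mul_le_mul_of_nonneg_left (h k j) (hM i k)

/-- Core contradiction: if `H ≥ 0`, `H * Xcal = Xcal - X₂` with `X₂ ≥ 0`, `Xcal ≥ 0`,
`H * (X₂ * P₂) = H`, then there is no nonzero nonnegative vector `w` with `w ≤ H w`. -/
lemma no_super_vector {m n : ℕ} (P₂ : Matrix (Fin m) (Fin n) ℝ)
    (X₂ Xcal : Matrix (Fin n) (Fin m) ℝ) (H : Matrix (Fin n) (Fin n) ℝ)
    (hH0 : ∀ i j, 0 ≤ H i j) (hX0 : ∀ i j, 0 ≤ X₂ i j) (hXc0 : ∀ i j, 0 ≤ Xcal i j)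
    (hHX : H * Xcal = Xcal - X₂) (hHQ : H * (X₂ * P₂) = H)
    (w : Fin n → ℝ) (hw0 : ∀ i, 0 ≤ w i) (hwne : w ≠ 0)
    (hww : ∀ i, w i ≤ (H.mulVec w) i) : False := by
  obtain ⟨i₀, hi₀⟩ : ∃ i, 0 < w i := by
    by_contra h
    push_neg at h
    exact hwne (funext fun i => le_antisymm (h i) (hw0 i))
  have hw'pos : 0 < (H.mulVec w) i₀ := lt_of_lt_of_le hi₀ (hww i₀)
  have mono : ∀ (u v : Fin n → ℝ), (∀ i, u i ≤ v i) → ∀ i, (H.mulVec u) i ≤ (H.mulVec v) i := by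
    intro u v huv i
    simp only [Matrix.mulVec, dotProduct]
    exact Finset.sum_le_sum fun j _ => mul_le_mul_of_nonneg_left (huv j) (hH0 i j)
  -- powers of H applied to Xcal stay between 0 and Xcal
  have hXk : ∀ k : ℕ, (∀ i j, 0 ≤ (H ^ k * Xcal) i j) ∧ (∀ i j, (H ^ k * Xcal) i j ≤ Xcal i j) := by
    intro k
    induction k with
    | zero =>
      rw [pow_zero, Matrix.one_mul]
      exact ⟨hXc0, fun i j => le_refl _⟩
    | succ k ih =>
      have h1 : H ^ (k + 1) * Xcal = H * (H ^ k * Xcal) := by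
        rw [pow_succ', Matrix.mul_assoc]
      constructor
      · rw [h1]; exact entry_mul_nonneg' hH0 ih.1
      · intro i j
        rw [h1]
        calc (H * (H ^ k * Xcal)) i j ≤ (H * Xcal) i j := entry_mul_le' hH0 ih.2 i j
        _ = (Xcal - X₂) i j := by rw [hHX]
        _ ≤ Xcal i j := by
            rw [Matrix.sub_apply]
            exact sub_le_self _ (hX0 i j)
  -- telescoping identity
  have hTel : ∀ k : ℕ, H ^ (k + 1) = (H ^ (k + 1) * Xcal) * P₂ - (H ^ (k + 2) * Xcal) * P₂ := by
    intro k
    have h1 : H ^ (k + 1) * (X₂ * P₂) = H ^ (k + 1) := by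
      calc H ^ (k + 1) * (X₂ * P₂) = H ^ k * (H * (X₂ * P₂)) := by rw [pow_succ, mul_assoc]
      _ = H ^ k * H := by rw [hHQ]
      _ = H ^ (k + 1) := (pow_succ H k).symm
    have h2 : X₂ = Xcal - H * Xcal := by rw [hHX]; abel
    calc H ^ (k + 1) = H ^ (k + 1) * (X₂ * P₂) := h1.symm
    _ = (H ^ (k + 1) * X₂) * P₂ := by rw [Matrix.mul_assoc]
    _ = (H ^ (k + 1) * (Xcal - H * Xcal)) * P₂ := by rw [← h2]
    _ = (H ^ (k + 1) * Xcal - H ^ (k + 2) * Xcal) * P₂ := by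
        rw [Matrix.mul_sub, ← Matrix.mul_assoc, ← pow_succ]
    _ = (H ^ (k + 1) * Xcal) * P₂ - (H ^ (k + 2) * Xcal) * P₂ := by rw [Matrix.sub_mul]
  set u : Fin m → ℝ := P₂.mulVec w with hu
  set au : Fin m → ℝ := fun j => |u j| with hau
  -- uniform bound
  have hb : ∀ (M : Matrix (Fin n) (Fin m) ℝ), (∀ i j, 0 ≤ M i j) → (∀ i j, M i j ≤ Xcal i j) →
      ∀ i, |(M.mulVec u) i| ≤ (Xcal.mulVec au) i := by
    intro M h0 hle i
    simp only [Matrix.mulVec, dotProduct]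
    calc |∑ j, M i j * u j| ≤ ∑ j, |M i j * u j| := Finset.abs_sum_le_sum_abs _ _
    _ ≤ ∑ j, Xcal i j * au j := by
        refine Finset.sum_le_sum fun j _ => ?_
        rw [abs_mul, abs_of_nonneg (h0 i j)]
        exact mul_le_mul_of_nonneg_right (hle i j) (abs_nonneg _)
  -- growth
  have hge : ∀ k, ∀ i, w i ≤ ((H ^ k).mulVec w) i := by
    intro k
    induction k with
    | zero => intro i; rw [pow_zero, Matrix.one_mulVec]
    | succ k ih =>
      intro i
      have h1 : (H ^ (k + 1)).mulVec w = H.mulVec ((H ^ k).mulVec w) := by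
        rw [Matrix.mulVec_mulVec, ← pow_succ']
      rw [h1]
      exact le_trans (hww i) (mono w ((H ^ k).mulVec w) ih i)
  have hge' : ∀ k, ∀ i, (H.mulVec w) i ≤ ((H ^ (k + 1)).mulVec w) i := by
    intro k i
    have h1 : (H ^ (k + 1)).mulVec w = H.mulVec ((H ^ k).mulVec w) := by
      rw [Matrix.mulVec_mulVec, ← pow_succ']
    rw [h1]
    exact mono w ((H ^ k).mulVec w) (hge k) i
  -- each H^{k+1} w in terms of telescoping
  have hstep : ∀ k : ℕ, ((H ^ (k + 1)).mulVec w) i₀ =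
      ((H ^ (k + 1) * Xcal).mulVec u) i₀ - ((H ^ (k + 2) * Xcal).mulVec u) i₀ := by
    intro k
    have h2 : ∀ (M : Matrix (Fin n) (Fin m) ℝ), ((M * P₂).mulVec w) = M.mulVec u := by
      intro M; rw [hu, Matrix.mulVec_mulVec]
    have h1 : (H ^ (k + 1) *ᵥ w) i₀
        = ((H ^ (k + 1) * Xcal * P₂ - H ^ (k + 2) * Xcal * P₂) *ᵥ w) i₀ := by
      rw [← hTel k]
    rw [Matrix.sub_mulVec, Pi.sub_apply, h2, h2] at h1
    exact h1
  -- summation bound by induction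
  have hsum : ∀ K : ℕ, (K + 1 : ℝ) * (H.mulVec w) i₀ ≤
      ((H ^ 1 * Xcal).mulVec u) i₀ - ((H ^ (K + 2) * Xcal).mulVec u) i₀ := by
    intro K
    induction K with
    | zero =>
      have h1 : ((H ^ 1) *ᵥ w) i₀
          = ((H ^ 1 * Xcal) *ᵥ u) i₀ - ((H ^ (0 + 2) * Xcal) *ᵥ u) i₀ := hstep 0
      have h2 : ((H ^ 1) *ᵥ w) i₀ = (H *ᵥ w) i₀ := by rw [pow_one]
      push_cast
      linarith
    | succ K ih =>
      have h1 : (H ^ (K + 2) *ᵥ w) i₀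
          = ((H ^ (K + 2) * Xcal) *ᵥ u) i₀ - ((H ^ (K + 3) * Xcal) *ᵥ u) i₀ := hstep (K + 1)
      have h2 : (H *ᵥ w) i₀ ≤ ((H ^ (K + 2)) *ᵥ w) i₀ := hge' (K + 1) i₀
      show (↑(K + 1) + 1 : ℝ) * (H *ᵥ w) i₀
          ≤ ((H ^ 1 * Xcal) *ᵥ u) i₀ - ((H ^ (K + 3) * Xcal) *ᵥ u) i₀
      push_cast
      push_cast at ih
      linarith
  -- uniform bound on RHS
  have hbound : ∀ K : ℕ, (K + 1 : ℝ) * (H.mulVec w) i₀ ≤ 2 * (Xcal.mulVec au) i₀ := by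
    intro K
    have h1 := hb (H ^ 1 * Xcal) (hXk 1).1 (hXk 1).2 i₀
    have h2 := hb (H ^ (K + 2) * Xcal) (hXk (K + 2)).1 (hXk (K + 2)).2 i₀
    have h3 := hsum K
    have h4 : ((H ^ 1 * Xcal).mulVec u) i₀ - ((H ^ (K + 2) * Xcal).mulVec u) i₀
        ≤ |((H ^ 1 * Xcal).mulVec u) i₀| + |((H ^ (K + 2) * Xcal).mulVec u) i₀| := by
      have := abs_sub_abs_le_abs_sub (((H ^ 1 * Xcal)).mulVec u i₀) (((H ^ (K + 2) * Xcal)).mulVec u i₀)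
      calc ((H ^ 1 * Xcal).mulVec u) i₀ - ((H ^ (K + 2) * Xcal).mulVec u) i₀
          ≤ |((H ^ 1 * Xcal).mulVec u) i₀| - -(|((H ^ (K + 2) * Xcal).mulVec u) i₀|) := by
            have ha := le_abs_self (((H ^ 1 * Xcal)).mulVec u i₀)
            have hbb := neg_abs_le (((H ^ (K + 2) * Xcal)).mulVec u i₀)
            linarith
      _ = |((H ^ 1 * Xcal).mulVec u) i₀| + |((H ^ (K + 2) * Xcal).mulVec u) i₀| := by ring
    linarith
  obtain ⟨K, hK⟩ := exists_nat_gt (2 * (Xcal.mulVec au) i₀ / (H.mulVec w) i₀)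
  have h5 := hbound K
  have h6 : 2 * (Xcal.mulVec au) i₀ / (H.mulVec w) i₀ < (K + 1 : ℝ) := lt_trans hK (lt_add_one _)
  rw [div_lt_iff₀ hw'pos] at h6
  linarith


/-- If eigenvalue inequalities are impossible, the spectral radius of the companion block
matrix is `< 1`. -/
lemma specRad_companion_lt_one {n : ℕ} (Bm Cm : Matrix (Fin n) (Fin n) ℝ)
    (hB0 : ∀ i j, 0 ≤ Bm i j) (hC0 : ∀ i j, 0 ≤ Cm i j)
    (hkey : ∀ w : Fin n → ℝ, (∀ i, 0 ≤ w i) → w ≠ 0 →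
      (∀ i, w i ≤ ((Bm + Cm).mulVec w) i) → False) :
    specRad (Matrix.fromBlocks Bm Cm 1 0) < 1 := by
  classical
  set Wc := (Matrix.fromBlocks Bm Cm (1 : Matrix (Fin n) (Fin n) ℝ) 0).map
      (Complex.ofReal) with hWc
  have hWcB : Wc = Matrix.fromBlocks (Bm.map Complex.ofReal) (Cm.map Complex.ofReal) 1 0 := by
    rw [hWc, Matrix.fromBlocks_map,
      Matrix.map_one _ Complex.ofReal_zero Complex.ofReal_one,
      Matrix.map_zero _ Complex.ofReal_zero]
  have habs : ∀ z ∈ spectrum ℂ Wc, ‖z‖ < 1 := by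
    intro z hz
    by_contra hge
    push_neg at hge
    -- extract an eigenvector
    have hdet : ((algebraMap ℂ (Matrix (Fin n ⊕ Fin n) (Fin n ⊕ Fin n) ℂ) z) - Wc).det = 0 := by
      have h1 := spectrum.mem_iff.mp hz
      by_contra hd
      exact h1 ((Matrix.isUnit_iff_isUnit_det _).mpr (isUnit_iff_ne_zero.mpr hd))
    obtain ⟨v, hv0, hv⟩ := (Matrix.exists_mulVec_eq_zero_iff).mpr hdet
    have hWv : Wc.mulVec v = z • v := by
      rw [Matrix.sub_mulVec] at hv
      have h2 : (algebraMap ℂ (Matrix (Fin n ⊕ Fin n) (Fin n ⊕ Fin n) ℂ) z).mulVec v = z • v := by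
        rw [Algebra.algebraMap_eq_smul_one, Matrix.smul_mulVec, Matrix.one_mulVec]
      rw [h2] at hv
      exact (sub_eq_zero.mp hv).symm
    set x : Fin n → ℂ := v ∘ Sum.inl with hx
    set y : Fin n → ℂ := v ∘ Sum.inr with hy
    rw [hWcB, Matrix.fromBlocks_mulVec] at hWv
    have h_inl : ∀ i, ((Bm.map Complex.ofReal).mulVec x) i + ((Cm.map Complex.ofReal).mulVec y) i
        = z * x i := by
      intro i
      have := congrFun hWv (Sum.inl i)
      simpa [hx, hy] using this
    have h_inr : ∀ i, x i = z * y i := by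
      intro i
      have := congrFun hWv (Sum.inr i)
      simpa [hx, hy, Matrix.one_mulVec, Matrix.zero_mulVec] using this
    have hy0 : y ≠ 0 := by
      intro h
      apply hv0
      funext s
      cases s with
      | inl i =>
        have h1 := h_inr i
        have h2 : y i = 0 := by rw [h]; rfl
        show x i = 0
        rw [h1, h2, mul_zero]
      | inr i =>
        show y i = 0
        rw [h]; rfl
    set w : Fin n → ℝ := fun i => ‖y i‖ with hw
    have hw0 : ∀ i, 0 ≤ w i := fun i => norm_nonneg _
    have hwne : w ≠ 0 := by
      intro h
      apply hy0
      funext i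
      have : w i = 0 := by rw [h]; rfl
      exact norm_eq_zero.mp this
    have hzpos : (0 : ℝ) < ‖z‖ := lt_of_lt_of_le one_pos hge
    have hineq : ∀ i, w i ≤ ((Bm + Cm).mulVec w) i := by
      intro i
      -- the eigen equation gives |z|^2 w i ≤ |z| * ((Bm+Cm) w) i
      have h1 : (z * z) * y i = ((Bm.map Complex.ofReal).mulVec x) i
          + ((Cm.map Complex.ofReal).mulVec y) i := by
        rw [h_inl i, h_inr i, mul_assoc]
      have habs1 : ‖(z * z) * y i‖ = ‖z‖ * ‖z‖ * w i := by
        rw [norm_mul, norm_mul]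
      have hBx : ‖((Bm.map Complex.ofReal).mulVec x) i‖
          ≤ ‖z‖ * (Bm.mulVec w) i := by
        simp only [Matrix.mulVec, dotProduct, Matrix.map_apply]
        calc ‖∑ j, (Complex.ofReal (Bm i j)) * x j‖
            ≤ ∑ j, ‖(Complex.ofReal (Bm i j)) * x j‖ :=
              norm_sum_le _ _
        _ = ∑ j, Bm i j * (‖z‖ * w j) := by
            refine Finset.sum_congr rfl fun j _ => ?_
            rw [norm_mul, Complex.norm_real, Real.norm_eq_abs, abs_of_nonneg (hB0 i j), h_inr j, norm_mul]
        _ = ‖z‖ * ∑ j, Bm i j * w j := by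
            rw [Finset.mul_sum]
            refine Finset.sum_congr rfl fun j _ => by ring
      have hCy : ‖((Cm.map Complex.ofReal).mulVec y) i‖
          ≤ ‖z‖ * (Cm.mulVec w) i := by
        have hle1 : ‖((Cm.map Complex.ofReal).mulVec y) i‖ ≤ (Cm.mulVec w) i := by
          simp only [Matrix.mulVec, dotProduct, Matrix.map_apply]
          calc ‖∑ j, (Complex.ofReal (Cm i j)) * y j‖
              ≤ ∑ j, ‖(Complex.ofReal (Cm i j)) * y j‖ := norm_sum_le _ _
          _ = ∑ j, Cm i j * w j := by
              refine Finset.sum_congr rfl fun j _ => ?_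
              rw [norm_mul, Complex.norm_real, Real.norm_eq_abs, abs_of_nonneg (hC0 i j)]
        have hnn : 0 ≤ (Cm.mulVec w) i := by
          simp only [Matrix.mulVec, dotProduct]
          exact Finset.sum_nonneg fun j _ => mul_nonneg (hC0 i j) (hw0 j)
        calc ‖((Cm.map Complex.ofReal).mulVec y) i‖ ≤ (Cm.mulVec w) i := hle1
        _ = 1 * (Cm.mulVec w) i := (one_mul _).symm
        _ ≤ ‖z‖ * (Cm.mulVec w) i := mul_le_mul_of_nonneg_right hge hnn
      have h3 : ‖z‖ * ‖z‖ * w i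
          ≤ ‖z‖ * ((Bm + Cm).mulVec w) i := by
        have h4 : ‖(z * z) * y i‖
            ≤ ‖((Bm.map Complex.ofReal).mulVec x) i‖
              + ‖((Cm.map Complex.ofReal).mulVec y) i‖ := by
          rw [h1]
          exact norm_add_le _ _
        have h5 : (Bm.mulVec w) i + (Cm.mulVec w) i = ((Bm + Cm).mulVec w) i := by
          rw [Matrix.add_mulVec, Pi.add_apply]
        rw [habs1] at h4
        calc ‖z‖ * ‖z‖ * w i
            ≤ ‖z‖ * (Bm.mulVec w) i + ‖z‖ * (Cm.mulVec w) i :=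
              le_trans h4 (add_le_add hBx hCy)
        _ = ‖z‖ * ((Bm.mulVec w) i + (Cm.mulVec w) i) := by ring
        _ = ‖z‖ * ((Bm + Cm).mulVec w) i := by rw [h5]
      have h6 : ‖z‖ * w i ≤ ((Bm + Cm).mulVec w) i := by
        have := le_of_mul_le_mul_left (by
          calc ‖z‖ * (‖z‖ * w i)
              = ‖z‖ * ‖z‖ * w i := by ring
          _ ≤ ‖z‖ * ((Bm + Cm).mulVec w) i := h3) hzpos
        exact this
      calc w i = 1 * w i := (one_mul _).symm
      _ ≤ ‖z‖ * w i := mul_le_mul_of_nonneg_right hge (hw0 i)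
      _ ≤ ((Bm + Cm).mulVec w) i := h6
    exact hkey w hw0 hwne hineq
  -- conclude via finiteness of the spectrum
  show sSup ((fun z : ℂ => ‖z‖) '' spectrum ℂ Wc) < 1
  rcases ((fun z : ℂ => ‖z‖) '' spectrum ℂ Wc).eq_empty_or_nonempty with he | hne
  · rw [he, Real.sSup_empty]; norm_num
  · have hfin : ((fun z : ℂ => ‖z‖) '' spectrum ℂ Wc).Finite :=
      (Matrix.finite_spectrum Wc).image _
    obtain ⟨zz, hzz, hzeq⟩ := hne.csSup_mem hfin
    rw [← hzeq]
    exact habs zz hzz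


end HTADSAux

open HTADSAux in
theorem htads_convergence_weak_regular {m n : ℕ}
    (A P₁ R₁ S₁ P₂ R₂ S₂ : Matrix (Fin m) (Fin n) ℝ)
    (X₁ X₂ Xcal : Matrix (Fin n) (Fin m) ℝ)
    (hX₁ : IsMP P₁ X₁)
    (hX₂ : IsMP P₂ X₂)
    (hsplit₁ : A = P₁ - R₁ + S₁)
    (hrange₁ : LinearMap.range (P₁).mulVecLin = LinearMap.range (A).mulVecLin)
    (hker₁ : LinearMap.ker (P₁).mulVecLin = LinearMap.ker (A).mulVecLin)
    (hwr₁a : MatLE 0 X₁)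
    (hwr₁b : MatLE 0 (X₁ * R₁))
    (hwr₁c : MatLE (X₁ * S₁) 0)
    (hsplit₂ : A = P₂ - R₂ + S₂)
    (hrange₂ : LinearMap.range (P₂).mulVecLin = LinearMap.range (A).mulVecLin)
    (hker₂ : LinearMap.ker (P₂).mulVecLin = LinearMap.ker (A).mulVecLin)
    (hwr₂a : MatLE 0 X₂)
    (hwr₂b : MatLE 0 (X₂ * R₂))
    (hwr₂c : MatLE (X₂ * S₂) 0)
    (hNR : LinearMap.ker (P₂).mulVecLin ≤ LinearMap.ker (R₂).mulVecLin)
    (hRR : LinearMap.range (R₂).mulVecLin ≤ LinearMap.range (P₂).mulVecLin)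
    (hunit : IsUnit (1 + R₂ * X₁))
    (hXcal : IsMP ((1 + R₂ * X₁) * A) Xcal)
    (hXcalpos : MatLE 0 Xcal)
    : specRad (Matrix.fromBlocks (X₂ * R₂ * X₁ * R₁ - X₂ * S₂) (-(X₂ * R₂ * X₁ * S₁)) 1 0) < 1 := by
  classical
  -- range facts
  have hrA : ∀ v : Fin n → ℝ, ∃ y, P₂.mulVec y = A.mulVec v := by
    intro v
    have h1 : A.mulVec v ∈ LinearMap.range A.mulVecLin := ⟨v, Matrix.mulVecLin_apply _ _⟩
    rw [← hrange₂] at h1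
    obtain ⟨y, hy⟩ := h1
    exact ⟨y, by rwa [Matrix.mulVecLin_apply] at hy⟩
  have hrR : ∀ v : Fin n → ℝ, ∃ y, P₂.mulVec y = R₂.mulVec v := by
    intro v
    have h1 : R₂.mulVec v ∈ LinearMap.range R₂.mulVecLin := ⟨v, Matrix.mulVecLin_apply _ _⟩
    have h2 := hRR h1
    obtain ⟨y, hy⟩ := h2
    exact ⟨y, by rwa [Matrix.mulVecLin_apply] at hy⟩
  -- kernel facts
  have hkPA : ∀ v : Fin n → ℝ, P₂.mulVec v = 0 → A.mulVec v = 0 := by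
    intro v h
    have h1 : v ∈ LinearMap.ker P₂.mulVecLin := by
      rw [LinearMap.mem_ker, Matrix.mulVecLin_apply]; exact h
    rw [hker₂] at h1
    rwa [LinearMap.mem_ker, Matrix.mulVecLin_apply] at h1
  have hkPR : ∀ v : Fin n → ℝ, P₁.mulVec v = 0 → R₂.mulVec v = 0 := by
    intro v h
    have h1 : v ∈ LinearMap.ker P₁.mulVecLin := by
      rw [LinearMap.mem_ker, Matrix.mulVecLin_apply]; exact h
    rw [hker₁, ← hker₂] at h1
    have h2 := hNR h1
    rwa [LinearMap.mem_ker, Matrix.mulVecLin_apply] at h2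
  -- absorption identities
  have hPXA : P₂ * X₂ * A = A := absorb P₂ X₂ A hX₂.1 hrA
  have hPXR : P₂ * X₂ * R₂ = R₂ := absorb P₂ X₂ R₂ hX₂.1 hrR
  have hAQ : A * (X₂ * P₂) = A := by
    refine ker_absorb P₂ A (X₂ * P₂) ?_ hkPA
    rw [← Matrix.mul_assoc, hX₂.1]
  have hRXP : R₂ * (X₁ * P₁) = R₂ := by
    refine ker_absorb P₁ R₂ (X₁ * P₁) ?_ hkPR
    rw [← Matrix.mul_assoc, hX₁.1]
  -- invertibility of J = 1 + R₂ * X₁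
  obtain ⟨uu, huu⟩ := hunit
  have hJ1 : (1 + R₂ * X₁) * (↑uu⁻¹ : Matrix (Fin m) (Fin m) ℝ) = 1 := by
    rw [← huu]; exact uu.mul_inv
  have hJ2 : (↑uu⁻¹ : Matrix (Fin m) (Fin m) ℝ) * (1 + R₂ * X₁) = 1 := by
    rw [← huu]; exact uu.inv_mul
  -- range of Ahat equals range of A
  have hrangeAhat : LinearMap.range ((1 + R₂ * X₁) * A).mulVecLin
      = LinearMap.range A.mulVecLin := by
    rw [Matrix.mulVecLin_mul, LinearMap.range_comp]
    have hle : Submodule.map (1 + R₂ * X₁).mulVecLin (LinearMap.range A.mulVecLin)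
        ≤ LinearMap.range A.mulVecLin := by
      rintro xx hxx
      rw [Submodule.mem_map] at hxx
      obtain ⟨a, ha, rfl⟩ := hxx
      have h1 : (1 + R₂ * X₁).mulVecLin a = a + R₂.mulVec (X₁.mulVec a) := by
        rw [Matrix.mulVecLin_apply, Matrix.add_mulVec, Matrix.one_mulVec,
          ← Matrix.mulVec_mulVec]
      rw [h1]
      refine Submodule.add_mem _ ha ?_
      have h2 : R₂.mulVec (X₁.mulVec a) ∈ LinearMap.range R₂.mulVecLin :=
        ⟨X₁.mulVec a, Matrix.mulVecLin_apply _ _⟩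
      have h3 := hRR h2
      rwa [hrange₂] at h3
    have hfr := LinearEquiv.finrank_map_eq
      (LinearEquiv.ofLinear (1 + R₂ * X₁).mulVecLin
        (↑uu⁻¹ : Matrix (Fin m) (Fin m) ℝ).mulVecLin
        (by rw [← Matrix.mulVecLin_mul, hJ1, Matrix.mulVecLin_one])
        (by rw [← Matrix.mulVecLin_mul, hJ2, Matrix.mulVecLin_one]))
      (LinearMap.range A.mulVecLin)
    rw [LinearEquiv.ofLinear_toLinearMap] at hfr
    exact Submodule.eq_of_le_of_finrank_le hle hfr.ge
  -- columns of P₂ lie in range of Ahat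
  have hrP : ∀ v : Fin n → ℝ, ∃ y, ((1 + R₂ * X₁) * A).mulVec y = P₂.mulVec v := by
    intro v
    have h1 : P₂.mulVec v ∈ LinearMap.range P₂.mulVecLin := ⟨v, Matrix.mulVecLin_apply _ _⟩
    rw [hrange₂, ← hrangeAhat] at h1
    obtain ⟨y, hy⟩ := h1
    exact ⟨y, by rwa [Matrix.mulVecLin_apply] at hy⟩
  have hAXP : ((1 + R₂ * X₁) * A) * Xcal * P₂ = P₂ := absorb _ Xcal P₂ hXcal.1 hrP
  -- Q * Xcal = Xcal
  have hXcal_eq : Xcal = ((1 + R₂ * X₁) * A)ᵀ * Xcalᵀ * Xcal := by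
    calc Xcal = Xcal * ((1 + R₂ * X₁) * A) * Xcal := hXcal.2.1.symm
    _ = (Xcal * ((1 + R₂ * X₁) * A))ᵀ * Xcal := by rw [hXcal.2.2.2]
    _ = ((1 + R₂ * X₁) * A)ᵀ * Xcalᵀ * Xcal := by rw [Matrix.transpose_mul]
  have hQAT : (X₂ * P₂) * Aᵀ = Aᵀ := by
    calc (X₂ * P₂) * Aᵀ = (X₂ * P₂)ᵀ * Aᵀ := by rw [hX₂.2.2.2]
    _ = (A * (X₂ * P₂))ᵀ := by rw [← Matrix.transpose_mul]
    _ = Aᵀ := by rw [hAQ]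
  have hQAhT : (X₂ * P₂) * ((1 + R₂ * X₁) * A)ᵀ = ((1 + R₂ * X₁) * A)ᵀ := by
    rw [Matrix.transpose_mul, ← Matrix.mul_assoc, hQAT]
  have hQXcal : (X₂ * P₂) * Xcal = Xcal := by
    calc (X₂ * P₂) * Xcal
        = (X₂ * P₂) * (((1 + R₂ * X₁) * A)ᵀ * Xcalᵀ * Xcal) :=
          congrArg (fun M => (X₂ * P₂) * M) hXcal_eq
    _ = (X₂ * P₂) * (((1 + R₂ * X₁) * A)ᵀ * Xcalᵀ) * Xcal := by
        rw [Matrix.mul_assoc (X₂ * P₂) (((1 + R₂ * X₁) * A)ᵀ * Xcalᵀ) Xcal]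
    _ = (X₂ * P₂) * ((1 + R₂ * X₁) * A)ᵀ * Xcalᵀ * Xcal := by
        rw [Matrix.mul_assoc (X₂ * P₂) (((1 + R₂ * X₁) * A)ᵀ) (Xcalᵀ)]
    _ = ((1 + R₂ * X₁) * A)ᵀ * Xcalᵀ * Xcal := by rw [hQAhT]
    _ = Xcal := hXcal_eq.symm
  -- X₂ * Ahat * Xcal = X₂
  have hX2_eq : X₂ = X₂ * X₂ᵀ * P₂ᵀ := by
    calc X₂ = X₂ * P₂ * X₂ := hX₂.2.1.symm
    _ = X₂ * (P₂ * X₂) := by rw [Matrix.mul_assoc]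
    _ = X₂ * (P₂ * X₂)ᵀ := by rw [hX₂.2.2.1]
    _ = X₂ * (X₂ᵀ * P₂ᵀ) := by rw [Matrix.transpose_mul]
    _ = X₂ * X₂ᵀ * P₂ᵀ := by rw [Matrix.mul_assoc]
  have hPTAX : P₂ᵀ * (((1 + R₂ * X₁) * A) * Xcal) = P₂ᵀ := by
    calc P₂ᵀ * (((1 + R₂ * X₁) * A) * Xcal)
        = P₂ᵀ * (((1 + R₂ * X₁) * A) * Xcal)ᵀ := by rw [hXcal.2.2.1]
    _ = (((1 + R₂ * X₁) * A) * Xcal * P₂)ᵀ := by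
        rw [Matrix.transpose_mul (((1 + R₂ * X₁) * A) * Xcal) P₂]
    _ = P₂ᵀ := by rw [hAXP]
  have hXAX : X₂ * ((1 + R₂ * X₁) * A) * Xcal = X₂ := by
    calc X₂ * ((1 + R₂ * X₁) * A) * Xcal
        = X₂ * (((1 + R₂ * X₁) * A) * Xcal) := by rw [Matrix.mul_assoc]
    _ = X₂ * X₂ᵀ * P₂ᵀ * (((1 + R₂ * X₁) * A) * Xcal) := by rw [← hX2_eq]
    _ = X₂ * X₂ᵀ * (P₂ᵀ * (((1 + R₂ * X₁) * A) * Xcal)) := by rw [Matrix.mul_assoc]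
    _ = X₂ * X₂ᵀ * P₂ᵀ := by rw [hPTAX]
    _ = X₂ := hX2_eq.symm
  -- the H identity
  have e₁ : R₁ = P₁ + S₁ - A := by rw [hsplit₁]; abel
  have e₂ : S₂ = A - P₂ + R₂ := by rw [hsplit₂]; abel
  have h5 : X₂ * (R₂ * (X₁ * P₁)) = X₂ * R₂ := by rw [hRXP]
  have hHeq : (X₂ * R₂ * X₁ * R₁ - X₂ * S₂) + -(X₂ * R₂ * X₁ * S₁)
      = X₂ * P₂ - X₂ * ((1 + R₂ * X₁) * A) := by
    rw [e₁, e₂]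
    simp only [Matrix.mul_add, Matrix.mul_sub, Matrix.add_mul, Matrix.sub_mul,
      Matrix.one_mul, Matrix.mul_one, Matrix.mul_assoc]
    rw [h5]
    abel
  -- identities needed for the core lemma
  have hHX : ((X₂ * R₂ * X₁ * R₁ - X₂ * S₂) + -(X₂ * R₂ * X₁ * S₁)) * Xcal = Xcal - X₂ := by
    rw [hHeq, Matrix.sub_mul, hQXcal, hXAX]
  have hQQ : (X₂ * P₂) * (X₂ * P₂) = X₂ * P₂ := by
    rw [← Matrix.mul_assoc, hX₂.2.1]
  have hAhQ : (X₂ * ((1 + R₂ * X₁) * A)) * (X₂ * P₂) = X₂ * ((1 + R₂ * X₁) * A) := by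
    rw [Matrix.mul_assoc X₂ ((1 + R₂ * X₁) * A) (X₂ * P₂), Matrix.mul_assoc (1 + R₂ * X₁) A (X₂ * P₂), hAQ]
  have hHQ : ((X₂ * R₂ * X₁ * R₁ - X₂ * S₂) + -(X₂ * R₂ * X₁ * S₁)) * (X₂ * P₂)
      = (X₂ * R₂ * X₁ * R₁ - X₂ * S₂) + -(X₂ * R₂ * X₁ * S₁) := by
    rw [hHeq, Matrix.sub_mul, hQQ, hAhQ]
  -- nonnegativity
  have hB0 : ∀ i j, 0 ≤ (X₂ * R₂ * X₁ * R₁ - X₂ * S₂) i j := by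
    intro i j
    rw [Matrix.sub_apply]
    have hassoc : X₂ * R₂ * X₁ * R₁ = (X₂ * R₂) * (X₁ * R₁) := Matrix.mul_assoc _ _ _
    have h1 : (0:ℝ) ≤ (X₂ * R₂ * X₁ * R₁) i j := by
      rw [hassoc]
      exact entry_mul_nonneg (fun a b => by simpa using hwr₂b a b)
        (fun a b => by simpa using hwr₁b a b) i j
    have h2 : (X₂ * S₂) i j ≤ 0 := by simpa using hwr₂c i j
    linarith
  have hC0 : ∀ i j, 0 ≤ (-(X₂ * R₂ * X₁ * S₁)) i j := by
    intro i j
    rw [Matrix.neg_apply]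
    have hassoc : X₂ * R₂ * X₁ * S₁ = (X₂ * R₂) * (X₁ * S₁) := Matrix.mul_assoc _ _ _
    have h1 : (X₂ * R₂ * X₁ * S₁) i j ≤ 0 := by
      rw [hassoc]
      exact entry_mul_nonpos (fun a b => by simpa using hwr₂b a b)
        (fun a b => by simpa using hwr₁c a b) i j
    linarith
  have hH0 : ∀ i j, 0 ≤ ((X₂ * R₂ * X₁ * R₁ - X₂ * S₂) + -(X₂ * R₂ * X₁ * S₁)) i j := by
    intro i j
    rw [Matrix.add_apply]
    exact add_nonneg (hB0 i j) (hC0 i j)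
  -- finish
  refine specRad_companion_lt_one _ _ hB0 hC0 ?_
  intro w hw0 hwne hww
  exact no_super_vector P₂ X₂ Xcal _ hH0
    (fun i j => by simpa using hwr₂a i j)
    (fun i j => by simpa using hXcalpos i j)
    hHX hHQ w hw0 hwne hww
end

section
/- Let A = P₁ − R₁ + S₁ be a double proper weak regular splitting and A = P₂ − R₂ + S₂ be a double proper regular splitting of a semi-monotone matrix A ∈ ℝ^{m×n}. Suppose N(S₂) ⊇ N(P₂), R(S₂) ⊆ R(P₂), I − S₂P₁† is nonsingular, and Â† ≥ 0 where Â = (I − S₂P₁†)A. If P₁†R₁ ≥ P₂†R₂ and P₂†S₂ ≥ P₁†S₁, then ρ(W₁₂) ≤ ρ(T₁) < 1, where T₁ is the iteration matrix of the splitting A = P₁ − R₁ + S₁. -/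
open Matrix

set_option linter.unusedSectionVars false
set_option linter.unusedVariables false
set_option maxHeartbeats 1600000

namespace TGADSaux

section Spectral

variable {ι : Type*} [Fintype ι] [DecidableEq ι]

lemma vecMul_apply' (w : ι → ℝ) (M : Matrix ι ι ℝ) (j : ι) :
    (w ᵥ* M) j = ∑ i, w i * M i j := rfl

lemma specRad_nonneg' (M : Matrix ι ι ℝ) : 0 ≤ specRad M := by
  apply Real.sSup_nonneg
  rintro x ⟨z, _, rfl⟩
  exact norm_nonneg z

lemma exists_left_eigvec (M : Matrix ι ι ℝ) {z : ℂ}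
    (hz : z ∈ spectrum ℂ (M.map Complex.ofReal)) :
    ∃ v : ι → ℂ, v ≠ 0 ∧ v ᵥ* (M.map Complex.ofReal) = z • v := by
  rw [spectrum.mem_iff, Algebra.algebraMap_eq_smul_one] at hz
  have hdet : (z • (1 : Matrix ι ι ℂ) - M.map Complex.ofReal).det = 0 := by
    by_contra hd
    exact hz ((Matrix.isUnit_iff_isUnit_det _).mpr (Ne.isUnit hd))
  obtain ⟨v, hv0, hv⟩ := Matrix.exists_vecMul_eq_zero_iff.mpr hdet
  refine ⟨v, hv0, ?_⟩
  rw [Matrix.vecMul_sub, sub_eq_zero] at hv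
  rw [← hv]
  ext j
  simp [Matrix.vecMul, dotProduct, Matrix.smul_apply, Matrix.one_apply, mul_ite,
    Finset.sum_ite_eq', smul_eq_mul, mul_comm]

lemma abs_vecMul_le (M : Matrix ι ι ℝ) (hM : ∀ i j, 0 ≤ M i j) (v : ι → ℂ) (j : ι) :
    ‖(v ᵥ* (M.map Complex.ofReal)) j‖
      ≤ ((fun i => ‖v i‖) ᵥ* M) j := by
  simp only [Matrix.vecMul, dotProduct, Matrix.map_apply]
  refine (norm_sum_le _ _).trans ?_
  apply Finset.sum_le_sum
  intro i _
  rw [norm_mul, Complex.norm_real, Real.norm_eq_abs, abs_of_nonneg (hM i j)]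

lemma specRad_le_of_test (T : Matrix ι ι ℝ) (hT : ∀ i j, 0 ≤ T i j)
    (u : ι → ℝ) (hu : ∀ i, 0 < u i) (c : ℝ) (hc : 0 ≤ c)
    (hTu : ∀ i, (T *ᵥ u) i ≤ c * u i) : specRad T ≤ c := by
  apply Real.sSup_le _ hc
  rintro x ⟨z, hz, rfl⟩
  obtain ⟨v, hv0, hv⟩ := exists_left_eigvec T hz
  set w : ι → ℝ := fun i => ‖v i‖ with hwdef
  have hw0 : ∀ i, 0 ≤ w i := fun i => norm_nonneg _
  have hw : ∀ j, ‖z‖ * w j ≤ (w ᵥ* T) j := by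
    intro j
    have h1 : ‖(v ᵥ* (T.map Complex.ofReal)) j‖ = ‖z‖ * w j := by
      rw [hv]; simp [hwdef, norm_mul]
    rw [← h1]
    exact abs_vecMul_le T hT v j
  obtain ⟨i₀, hi₀⟩ : ∃ i, v i ≠ 0 := Function.ne_iff.mp hv0
  have hs : 0 < ∑ i, w i * u i := by
    refine Finset.sum_pos' (fun i _ => mul_nonneg (hw0 i) (hu i).le) ?_
    exact ⟨i₀, Finset.mem_univ _, mul_pos (norm_pos_iff.mpr hi₀) (hu i₀)⟩
  have key : ‖z‖ * (∑ i, w i * u i) ≤ c * (∑ i, w i * u i) := by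
    calc ‖z‖ * (∑ i, w i * u i) = ∑ i, (‖z‖ * w i) * u i := by
          rw [Finset.mul_sum]; congr 1; ext i; ring
      _ ≤ ∑ i, (w ᵥ* T) i * u i :=
          Finset.sum_le_sum fun i _ => mul_le_mul_of_nonneg_right (hw i) (hu i).le
      _ = ∑ i, w i * (T *ᵥ u) i := by
          simpa [dotProduct] using (dotProduct_mulVec w T u).symm
      _ ≤ ∑ i, w i * (c * u i) :=
          Finset.sum_le_sum fun i _ => mul_le_mul_of_nonneg_left (hTu i) (hw0 i)
      _ = c * (∑ i, w i * u i) := by rw [Finset.mul_sum]; congr 1; ext i; ring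
  exact le_of_mul_le_mul_right (by simpa [mul_comm] using key) hs

lemma specRad_lt_one' (T : Matrix ι ι ℝ)
    (h : ∀ z ∈ spectrum ℂ (T.map Complex.ofReal), ‖z‖ < 1) :
    specRad T < 1 := by
  have hfin : ((fun z : ℂ => ‖z‖) '' spectrum ℂ (T.map Complex.ofReal)).Finite :=
    (Matrix.finite_spectrum _).image _
  rcases Set.eq_empty_or_nonempty
      ((fun z : ℂ => ‖z‖) '' spectrum ℂ (T.map Complex.ofReal)) with he | hne
  · rw [specRad, he, Real.sSup_empty]; norm_num
  · obtain ⟨z, hz, hzeq⟩ := hne.csSup_mem hfin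
    rw [specRad, ← hzeq]
    exact h z hz

lemma specRad_of_isEmpty [IsEmpty ι] (M : Matrix ι ι ℝ) : specRad M = 0 := by
  haveI : Subsingleton (Matrix ι ι ℂ) := ⟨fun a b => by ext i j; exact isEmptyElim i⟩
  have hsp : spectrum ℂ (M.map Complex.ofReal) = ∅ := by
    rw [Set.eq_empty_iff_forall_notMem]
    intro z hz
    rw [spectrum.mem_iff] at hz
    exact hz (isUnit_of_subsingleton _)
  rw [specRad, hsp, Set.image_empty, Real.sSup_empty]

lemma pow_entry_nonneg (T : Matrix ι ι ℝ) (hT : ∀ i j, 0 ≤ T i j) (k : ℕ) :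
    ∀ i j, 0 ≤ (T ^ k) i j := by
  induction k with
  | zero => intro i j; rw [pow_zero]; by_cases h : i = j <;> simp [Matrix.one_apply, h]
  | succ k ih =>
      intro i j
      rw [pow_succ, Matrix.mul_apply]
      exact Finset.sum_nonneg fun l _ => mul_nonneg (ih i l) (hT l j)

attribute [local instance] Matrix.linftyOpNormedRing Matrix.linftyOpNormedAlgebra

lemma exists_pow_norm_lt [Nonempty ι] (T : Matrix ι ι ℝ) {c : ℝ} (hc : specRad T < c) :
    ∃ k : ℕ, 0 < k ∧ ∀ i, (∑ j, |(T ^ k) i j|) ≤ c ^ k := by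
  have hc0 : 0 < c := lt_of_le_of_lt (specRad_nonneg' T) hc
  set a : Matrix ι ι ℂ := T.map Complex.ofReal with ha
  have hsr : spectralRadius ℂ a ≤ ENNReal.ofReal (specRad T) := by
    rw [spectralRadius]
    refine iSup₂_le fun z hz => ?_
    have h1 : ‖z‖ ≤ specRad T :=
      le_csSup ((Matrix.finite_spectrum a).image _).bddAbove ⟨z, hz, rfl⟩
    calc (‖z‖₊ : ENNReal) = ENNReal.ofReal ‖z‖ := (ofReal_norm z).symm
      _ ≤ ENNReal.ofReal (specRad T) := by
          apply ENNReal.ofReal_le_ofReal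
          exact h1
  have hlt : spectralRadius ℂ a < ENNReal.ofReal c :=
    lt_of_le_of_lt hsr ((ENNReal.ofReal_lt_ofReal_iff hc0).mpr hc)
  have hg := spectrum.pow_nnnorm_pow_one_div_tendsto_nhds_spectralRadius a
  have hev : ∀ᶠ k : ℕ in Filter.atTop,
      ((‖a ^ k‖₊ : ENNReal) ^ (1 / (k : ℝ))) < ENNReal.ofReal c :=
    hg.eventually_lt_const hlt
  obtain ⟨k, hk1, hkb⟩ := ((Filter.eventually_ge_atTop 1).and hev).exists
  refine ⟨k, hk1, ?_⟩
  have hk0 : (k : ℝ) ≠ 0 := by positivity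
  have hx : (‖a ^ k‖₊ : ENNReal) < (ENNReal.ofReal c) ^ k := by
    have h2 := ENNReal.pow_lt_pow_left (n := k) (by omega) hkb
    rwa [← ENNReal.rpow_natCast ((‖a ^ k‖₊ : ENNReal) ^ (1 / (k : ℝ))) k,
      ← ENNReal.rpow_mul, one_div, inv_mul_cancel₀ hk0, ENNReal.rpow_one] at h2
  have hnorm : ‖a ^ k‖ < c ^ k := by
    rw [← ENNReal.ofReal_pow hc0.le] at hx
    rw [← show ENNReal.ofReal ‖a ^ k‖ = ‖a ^ k‖₊ from ofReal_norm (a ^ k)] at hx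
    exact (ENNReal.ofReal_lt_ofReal_iff_of_nonneg (norm_nonneg _)).mp hx
  intro i
  have hmap : a ^ k = (T ^ k).map Complex.ofReal := by
    have h3 : a = Complex.ofRealHom.mapMatrix T := rfl
    rw [h3, ← _root_.map_pow]
    rfl
  have hrow : (∑ j, ‖(a ^ k) i j‖₊) ≤ ‖a ^ k‖₊ := by
    rw [Matrix.linfty_opNNNorm_def]
    exact Finset.le_sup (f := fun i => ∑ j, ‖(a ^ k) i j‖₊) (Finset.mem_univ i)
  have hrowR : (∑ j, ‖(a ^ k) i j‖) ≤ ‖a ^ k‖ := by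
    have h4 := (NNReal.coe_le_coe).mpr hrow
    rwa [NNReal.coe_sum] at h4
  have h5 : (∑ j, |(T ^ k) i j|) = ∑ j, ‖(a ^ k) i j‖ := by
    apply Finset.sum_congr rfl; intro j _
    rw [hmap, Matrix.map_apply, Complex.norm_real, Real.norm_eq_abs]
  rw [h5]
  exact le_of_lt (lt_of_le_of_lt hrowR hnorm)

lemma exists_test_vec [Nonempty ι] (T : Matrix ι ι ℝ) (hT : ∀ i j, 0 ≤ T i j)
    {c : ℝ} (hc : specRad T < c) :
    ∃ u : ι → ℝ, (∀ i, 0 < u i) ∧ ∀ i, (T *ᵥ u) i ≤ c * u i := by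
  have hc0 : 0 < c := lt_of_le_of_lt (specRad_nonneg' T) hc
  obtain ⟨k, hk0, hkrow⟩ := exists_pow_norm_lt T hc
  set g : ℕ → ι → ℝ := fun l => (T ^ l) *ᵥ (fun _ => (1 : ℝ)) with hg
  have hg0 : ∀ l i, 0 ≤ g l i := by
    intro l i
    exact Finset.sum_nonneg fun j _ => mul_nonneg (pow_entry_nonneg T hT l i j) zero_le_one
  have hgsucc : ∀ l, T *ᵥ g l = g (l + 1) := by
    intro l
    rw [hg]
    simp only [Matrix.mulVec_mulVec]
    rw [← pow_succ']
  refine ⟨fun i => ∑ l ∈ Finset.range k, (c⁻¹) ^ l * g l i, ?_, ?_⟩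
  · intro i
    apply Finset.sum_pos'
    · intro l _
      exact mul_nonneg (by positivity) (hg0 l i)
    · refine ⟨0, Finset.mem_range.mpr hk0, ?_⟩
      simp [hg, Matrix.one_mulVec]
  · intro i
    have hTu : (T *ᵥ fun i => ∑ l ∈ Finset.range k, (c⁻¹) ^ l * g l i) i
        = ∑ l ∈ Finset.range k, (c⁻¹) ^ l * g (l + 1) i := by
      calc (T *ᵥ fun i => ∑ l ∈ Finset.range k, (c⁻¹) ^ l * g l i) i
          = ∑ x, ∑ l ∈ Finset.range k, T i x * ((c⁻¹) ^ l * g l x) := by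
            simp only [Matrix.mulVec, dotProduct, Finset.mul_sum]
        _ = ∑ l ∈ Finset.range k, ∑ x, T i x * ((c⁻¹) ^ l * g l x) := Finset.sum_comm
        _ = ∑ l ∈ Finset.range k, (c⁻¹) ^ l * ∑ x, T i x * g l x := by
            apply Finset.sum_congr rfl; intro l _
            rw [Finset.mul_sum]; apply Finset.sum_congr rfl; intro x _; ring
        _ = ∑ l ∈ Finset.range k, (c⁻¹) ^ l * g (l + 1) i := by
            apply Finset.sum_congr rfl; intro l _
            rw [← hgsucc l]; rfl
    rw [hTu]
    set F : ℕ → ℝ := fun l => (c⁻¹) ^ l * g l i with hF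
    have hF0 : F 0 = 1 := by
      simp [hF, hg, Matrix.one_mulVec]
    have hFk : F k ≤ 1 := by
      have hgk : g k i ≤ c ^ k := by
        have h6 : g k i = ∑ j, (T ^ k) i j := by
          simp [hg, Matrix.mulVec, dotProduct]
        rw [h6]
        refine le_trans (le_of_eq ?_) (hkrow i)
        apply Finset.sum_congr rfl; intro j _
        rw [abs_of_nonneg (pow_entry_nonneg T hT k i j)]
      have h1 : (c⁻¹) ^ k * g k i ≤ (c⁻¹) ^ k * c ^ k :=
        mul_le_mul_of_nonneg_left hgk (by positivity)
      have h2 : (c⁻¹) ^ k * c ^ k = 1 := by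
        rw [← mul_pow, inv_mul_cancel₀ hc0.ne', one_pow]
      calc F k = (c⁻¹) ^ k * g k i := by rw [hF]
        _ ≤ 1 := h2 ▸ h1
    have key : (∑ l ∈ Finset.range k, (c⁻¹) ^ l * g (l + 1) i)
        = c * (∑ l ∈ Finset.range k, F l) - c * (F 0 - F k) := by
      have h1 : ∑ l ∈ Finset.range k, (F l - F (l + 1)) = F 0 - F k :=
        Finset.sum_range_sub' F k
      calc ∑ l ∈ Finset.range k, (c⁻¹) ^ l * g (l + 1) i
          = ∑ l ∈ Finset.range k, (c * F l - c * (F l - F (l + 1))) := by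
            apply Finset.sum_congr rfl; intro l _
            have h2 : (c⁻¹) ^ l * g (l + 1) i = c * F (l + 1) := by
              simp only [hF, pow_succ]
              field_simp
            rw [h2]; ring
        _ = c * (∑ l ∈ Finset.range k, F l) - c * (F 0 - F k) := by
            rw [Finset.sum_sub_distrib, ← Finset.mul_sum, ← Finset.mul_sum, h1]
    rw [key, hF0]
    have hsame : (∑ l ∈ Finset.range k, F l) = ∑ l ∈ Finset.range k, (c⁻¹) ^ l * g l i := by
      apply Finset.sum_congr rfl; intro l _; rw [hF]
    rw [hsame]
    nlinarith [hFk, hc0]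

end Spectral

section MP

variable {m n : Type*} [Fintype m] [Fintype n] [DecidableEq m] [DecidableEq n]

lemma ext_mulVec {M N : Matrix m n ℝ} (h : ∀ v, M *ᵥ v = N *ᵥ v) : M = N := by
  apply Matrix.toLin'.injective
  apply LinearMap.ext
  intro v
  simpa [Matrix.toLin'_apply] using h v

lemma mulVec_entry_nonneg (M : Matrix m n ℝ) (hM : ∀ i j, 0 ≤ M i j)
    (v : n → ℝ) (hv : ∀ j, 0 ≤ v j) : ∀ i, 0 ≤ (M *ᵥ v) i := by
  intro i
  exact Finset.sum_nonneg fun j _ => mul_nonneg (hM i j) (hv j)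

lemma mulVec_mono_vec (M : Matrix m n ℝ) (hM : ∀ i j, 0 ≤ M i j)
    {q r : n → ℝ} (hqr : ∀ j, q j ≤ r j) : ∀ i, (M *ᵥ q) i ≤ (M *ᵥ r) i := by
  intro i
  exact Finset.sum_le_sum fun j _ => mul_le_mul_of_nonneg_left (hqr j) (hM i j)

lemma mulVec_mono_mat {M N : Matrix m n ℝ} (hMN : ∀ i j, M i j ≤ N i j)
    (v : n → ℝ) (hv : ∀ j, 0 ≤ v j) : ∀ i, (M *ᵥ v) i ≤ (N *ᵥ v) i := by
  intro i
  exact Finset.sum_le_sum fun j _ => mul_le_mul_of_nonneg_right (hMN i j) (hv j)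

lemma projL_eq (A P : Matrix m n ℝ) (XA XP : Matrix n m ℝ)
    (hA1 : A * XA * A = A) (hA3 : (A * XA)ᵀ = A * XA)
    (hP1 : P * XP * P = P) (hP3 : (P * XP)ᵀ = P * XP)
    (hrange : LinearMap.range P.mulVecLin = LinearMap.range A.mulVecLin) :
    A * XA = P * XP := by
  have hEP : (A * XA) * P = P := by
    apply ext_mulVec
    intro v
    have hmem : P *ᵥ v ∈ LinearMap.range A.mulVecLin := by
      rw [← hrange]; exact ⟨v, rfl⟩
    obtain ⟨u, hu⟩ := hmem
    rw [Matrix.mulVecLin_apply] at hu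
    calc (A * XA * P) *ᵥ v = (A * XA) *ᵥ (P *ᵥ v) := by rw [← Matrix.mulVec_mulVec]
      _ = (A * XA) *ᵥ (A *ᵥ u) := by rw [hu]
      _ = (A * XA * A) *ᵥ u := by rw [Matrix.mulVec_mulVec]
      _ = A *ᵥ u := by rw [hA1]
      _ = P *ᵥ v := hu
  have hFA : (P * XP) * A = A := by
    apply ext_mulVec
    intro v
    have hmem : A *ᵥ v ∈ LinearMap.range P.mulVecLin := by
      rw [hrange]; exact ⟨v, rfl⟩
    obtain ⟨u, hu⟩ := hmem
    rw [Matrix.mulVecLin_apply] at hu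
    calc (P * XP * A) *ᵥ v = (P * XP) *ᵥ (A *ᵥ v) := by rw [← Matrix.mulVec_mulVec]
      _ = (P * XP) *ᵥ (P *ᵥ u) := by rw [hu]
      _ = (P * XP * P) *ᵥ u := by rw [Matrix.mulVec_mulVec]
      _ = P *ᵥ u := by rw [hP1]
      _ = A *ᵥ v := hu
  have e1 : (A * XA) * (P * XP) = P * XP := by rw [← Matrix.mul_assoc, hEP]
  have e2 : (P * XP) * (A * XA) = A * XA := by rw [← Matrix.mul_assoc, hFA]
  have e3 := congrArg Matrix.transpose e2
  rw [Matrix.transpose_mul, hA3, hP3, e1] at e3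
  exact e3.symm

lemma projR_eq (A P : Matrix m n ℝ) (XA XP : Matrix n m ℝ)
    (hA1 : A * XA * A = A) (hA4 : (XA * A)ᵀ = XA * A)
    (hP1 : P * XP * P = P) (hP4 : (XP * P)ᵀ = XP * P)
    (hker : LinearMap.ker P.mulVecLin = LinearMap.ker A.mulVecLin) :
    XA * A = XP * P := by
  have hQ1idem : (XA * A) * (XA * A) = XA * A := by
    rw [Matrix.mul_assoc XA A (XA * A), ← Matrix.mul_assoc A XA A, hA1]
  have hQ2idem : (XP * P) * (XP * P) = XP * P := by
    rw [Matrix.mul_assoc XP P (XP * P), ← Matrix.mul_assoc P XP P, hP1]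
  have hker21 : ∀ v, (XP * P) *ᵥ v = 0 → (XA * A) *ᵥ v = 0 := by
    intro v h
    have hPv : P *ᵥ v = 0 := by
      calc P *ᵥ v = (P * (XP * P)) *ᵥ v := by rw [← Matrix.mul_assoc, hP1]
        _ = P *ᵥ ((XP * P) *ᵥ v) := by rw [← Matrix.mulVec_mulVec]
        _ = 0 := by rw [h, Matrix.mulVec_zero]
    have hAv : A *ᵥ v = 0 := by
      have hv : v ∈ LinearMap.ker P.mulVecLin := by
        rw [LinearMap.mem_ker, Matrix.mulVecLin_apply]; exact hPv
      rw [hker, LinearMap.mem_ker, Matrix.mulVecLin_apply] at hv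
      exact hv
    calc (XA * A) *ᵥ v = XA *ᵥ (A *ᵥ v) := by rw [← Matrix.mulVec_mulVec]
      _ = 0 := by rw [hAv, Matrix.mulVec_zero]
  have hker12 : ∀ v, (XA * A) *ᵥ v = 0 → (XP * P) *ᵥ v = 0 := by
    intro v h
    have hAv : A *ᵥ v = 0 := by
      calc A *ᵥ v = (A * (XA * A)) *ᵥ v := by rw [← Matrix.mul_assoc, hA1]
        _ = A *ᵥ ((XA * A) *ᵥ v) := by rw [← Matrix.mulVec_mulVec]
        _ = 0 := by rw [h, Matrix.mulVec_zero]
    have hPv : P *ᵥ v = 0 := by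
      have hv : v ∈ LinearMap.ker A.mulVecLin := by
        rw [LinearMap.mem_ker, Matrix.mulVecLin_apply]; exact hAv
      rw [← hker, LinearMap.mem_ker, Matrix.mulVecLin_apply] at hv
      exact hv
    calc (XP * P) *ᵥ v = XP *ᵥ (P *ᵥ v) := by rw [← Matrix.mulVec_mulVec]
      _ = 0 := by rw [hPv, Matrix.mulVec_zero]
  have e1 : (XA * A) * (XP * P) = XA * A := by
    apply ext_mulVec
    intro v
    have h0 : (XA * A) *ᵥ (v - (XP * P) *ᵥ v) = 0 := by
      apply hker21
      rw [Matrix.mulVec_sub, Matrix.mulVec_mulVec, hQ2idem, sub_self]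
    rw [Matrix.mulVec_sub] at h0
    calc ((XA * A) * (XP * P)) *ᵥ v = (XA * A) *ᵥ ((XP * P) *ᵥ v) := by
          rw [Matrix.mulVec_mulVec]
      _ = (XA * A) *ᵥ v := (sub_eq_zero.mp h0).symm
  have e2 : (XP * P) * (XA * A) = XP * P := by
    apply ext_mulVec
    intro v
    have h0 : (XP * P) *ᵥ (v - (XA * A) *ᵥ v) = 0 := by
      apply hker12
      rw [Matrix.mulVec_sub, Matrix.mulVec_mulVec, hQ1idem, sub_self]
    rw [Matrix.mulVec_sub] at h0
    calc ((XP * P) * (XA * A)) *ᵥ v = (XP * P) *ᵥ ((XA * A) *ᵥ v) := by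
          rw [Matrix.mulVec_mulVec]
      _ = (XP * P) *ᵥ v := (sub_eq_zero.mp h0).symm
  have e3 := congrArg Matrix.transpose e1
  rw [Matrix.transpose_mul, hA4, hP4, e2] at e3
  exact e3.symm

end MP



variable {m n : Type*} [Fintype m] [Fintype n] [DecidableEq m] [DecidableEq n]

lemma vecMul_apply (v : m → ℝ) (M : Matrix m n ℝ) (j : n) :
    (v ᵥ* M) j = ∑ i, v i * M i j := rfl

lemma core_vanish (A P₁ R₁ S₁ : Matrix m n ℝ) (XA X₁ : Matrix n m ℝ)
    (hP11 : P₁ * X₁ * P₁ = P₁) (hP12 : X₁ * P₁ * X₁ = X₁)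
    (hAB : A * XA = P₁ * X₁) (hBA : XA * A = X₁ * P₁)
    (hA2 : XA * A * XA = XA)
    (hsplit : A = P₁ - R₁ + S₁)
    (hX₁pos : ∀ i j, 0 ≤ X₁ i j) (hXApos : ∀ i j, 0 ≤ XA i j)
    (w : n → ℝ) (hw0 : ∀ j, 0 ≤ w j)
    (hwG : ∀ j, w j ≤ (w ᵥ* (X₁ * (R₁ - S₁))) j) : w = 0 := by
  set y : m → ℝ := w ᵥ* X₁ with hy
  have hy0 : ∀ i, 0 ≤ y i := by
    intro i
    rw [hy, vecMul_apply]
    exact Finset.sum_nonneg fun j _ => mul_nonneg (hw0 j) (hX₁pos j i)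
  have hV : X₁ * (R₁ - S₁) = X₁ * P₁ - X₁ * A := by
    rw [← Matrix.mul_sub]; congr 1; rw [hsplit]; abel
  have hstep : ∀ j, (y ᵥ* A) j + w j ≤ (y ᵥ* P₁) j := by
    intro j
    have h1 : (w ᵥ* (X₁ * (R₁ - S₁))) j = (y ᵥ* P₁) j - (y ᵥ* A) j := by
      rw [hV, Matrix.vecMul_sub]
      simp only [Pi.sub_apply]
      rw [hy, Matrix.vecMul_vecMul, Matrix.vecMul_vecMul]
    have h2 := hwG j
    rw [h1] at h2
    linarith
  have idA : (y ᵥ* A) ᵥ* XA = y := by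
    calc (y ᵥ* A) ᵥ* XA = y ᵥ* (A * XA) := Matrix.vecMul_vecMul _ _ _
      _ = (w ᵥ* X₁) ᵥ* (P₁ * X₁) := by rw [hy, hAB]
      _ = w ᵥ* (X₁ * (P₁ * X₁)) := Matrix.vecMul_vecMul _ _ _
      _ = w ᵥ* X₁ := by rw [← Matrix.mul_assoc, hP12]
      _ = y := hy.symm
  have idP : (y ᵥ* P₁) ᵥ* XA = w ᵥ* XA := by
    calc (y ᵥ* P₁) ᵥ* XA = y ᵥ* (P₁ * XA) := Matrix.vecMul_vecMul _ _ _
      _ = (w ᵥ* X₁) ᵥ* (P₁ * XA) := by rw [hy]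
      _ = w ᵥ* (X₁ * (P₁ * XA)) := Matrix.vecMul_vecMul _ _ _
      _ = w ᵥ* ((X₁ * P₁) * XA) := by rw [Matrix.mul_assoc]
      _ = w ᵥ* ((XA * A) * XA) := by rw [hBA]
      _ = w ᵥ* XA := by rw [hA2]
  have hyineq : ∀ i, y i ≤ 0 := by
    intro i
    have hsum : ∑ j, ((y ᵥ* A) j + w j) * XA j i ≤ ∑ j, (y ᵥ* P₁) j * XA j i :=
      Finset.sum_le_sum fun j _ => mul_le_mul_of_nonneg_right (hstep j) (hXApos j i)
    have hL : ∑ j, ((y ᵥ* A) j + w j) * XA j i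
        = ((y ᵥ* A) ᵥ* XA) i + (w ᵥ* XA) i := by
      simp only [add_mul, Finset.sum_add_distrib]
      rw [vecMul_apply, vecMul_apply]
    have hR : ∑ j, (y ᵥ* P₁) j * XA j i = ((y ᵥ* P₁) ᵥ* XA) i := (vecMul_apply _ _ _).symm
    rw [hL, hR, idA, idP] at hsum
    linarith
  have hyzero : y = 0 := funext fun i => le_antisymm (hyineq i) (hy0 i)
  have hG0 : ∀ j, (w ᵥ* (X₁ * (R₁ - S₁))) j = 0 := by
    intro j
    have h3 : w ᵥ* (X₁ * (R₁ - S₁)) = (w ᵥ* X₁) ᵥ* (R₁ - S₁) :=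
      (Matrix.vecMul_vecMul _ _ _).symm
    rw [h3, ← hy, hyzero, Matrix.zero_vecMul]
    rfl
  funext j
  simp only [Pi.zero_apply]
  exact le_antisymm (le_of_le_of_eq (hwG j) (hG0 j)) (hw0 j)


end TGADSaux

theorem tgads_comparison_T1 {m n : ℕ}
    (A P₁ R₁ S₁ P₂ R₂ S₂ : Matrix (Fin m) (Fin n) ℝ)
    (XA X₁ X₂ Xhat : Matrix (Fin n) (Fin m) ℝ)
    (hX₁ : IsMP P₁ X₁)
    (hX₂ : IsMP P₂ X₂)
    (hXA : IsMP A XA)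
    (hsemi : MatLE 0 XA)
    (hsplit₁ : A = P₁ - R₁ + S₁)
    (hrange₁ : LinearMap.range (P₁).mulVecLin = LinearMap.range (A).mulVecLin)
    (hker₁ : LinearMap.ker (P₁).mulVecLin = LinearMap.ker (A).mulVecLin)
    (hwr₁a : MatLE 0 X₁)
    (hwr₁b : MatLE 0 (X₁ * R₁))
    (hwr₁c : MatLE (X₁ * S₁) 0)
    (hsplit₂ : A = P₂ - R₂ + S₂)
    (hrange₂ : LinearMap.range (P₂).mulVecLin = LinearMap.range (A).mulVecLin)
    (hker₂ : LinearMap.ker (P₂).mulVecLin = LinearMap.ker (A).mulVecLin)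
    (hreg₂a : MatLE 0 X₂)
    (hreg₂b : MatLE 0 R₂)
    (hreg₂c : MatLE S₂ 0)
    (hNS : LinearMap.ker (P₂).mulVecLin ≤ LinearMap.ker (S₂).mulVecLin)
    (hRS : LinearMap.range (S₂).mulVecLin ≤ LinearMap.range (P₂).mulVecLin)
    (hunit : IsUnit (1 - S₂ * X₁))
    (hXhat : IsMP ((1 - S₂ * X₁) * A) Xhat)
    (hXhatpos : MatLE 0 Xhat)
    (hc1 : MatLE (X₂ * R₂) (X₁ * R₁))
    (hc2 : MatLE (X₁ * S₁) (X₂ * S₂))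
    : specRad (Matrix.fromBlocks (X₂ * R₂ - X₂ * S₂ * X₁ * R₁) (X₂ * S₂ * X₁ * S₁) 1 0) ≤ specRad (Matrix.fromBlocks (X₁ * R₁) (-(X₁ * S₁)) 1 0) ∧ specRad (Matrix.fromBlocks (X₁ * R₁) (-(X₁ * S₁)) 1 0) < 1 := by
  classical
  obtain ⟨hP11, hP12, hP13, hP14⟩ := hX₁
  obtain ⟨hA1, hA2, hA3, hA4⟩ := hXA
  have hX₁pos : ∀ i j, 0 ≤ X₁ i j := fun i j => by simpa using hwr₁a i j
  have hXApos : ∀ i j, 0 ≤ XA i j := fun i j => by simpa using hsemi i j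
  have hH₁pos : ∀ i j, 0 ≤ (X₁ * R₁) i j := fun i j => by simpa using hwr₁b i j
  have hXS₁nonpos : ∀ i j, (X₁ * S₁) i j ≤ 0 := fun i j => by simpa using hwr₁c i j
  have hK₁pos : ∀ i j, 0 ≤ (-(X₁ * S₁)) i j := fun i j => by
    simp only [Matrix.neg_apply]
    exact neg_nonneg.mpr (hXS₁nonpos i j)
  have hAB : A * XA = P₁ * X₁ := TGADSaux.projL_eq A P₁ XA X₁ hA1 hA3 hP11 hP13 hrange₁
  have hBA : XA * A = X₁ * P₁ := TGADSaux.projR_eq A P₁ XA X₁ hA1 hA4 hP11 hP14 hker₁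
  have hcore : ∀ w : Fin n → ℝ, (∀ j, 0 ≤ w j) →
      (∀ j, w j ≤ (w ᵥ* (X₁ * (R₁ - S₁))) j) → w = 0 :=
    fun w h1 h2 => TGADSaux.core_vanish A P₁ R₁ S₁ XA X₁ hP11 hP12 hAB hBA hA2 hsplit₁
      hX₁pos hXApos w h1 h2
  set T₁ : Matrix (Fin n ⊕ Fin n) (Fin n ⊕ Fin n) ℝ :=
    Matrix.fromBlocks (X₁ * R₁) (-(X₁ * S₁)) 1 0 with hT₁def
  have hT₁pos : ∀ i j, 0 ≤ T₁ i j := by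
    rintro (i | i) (j | j)
    · simp only [hT₁def, Matrix.fromBlocks_apply₁₁]; exact hH₁pos i j
    · simp only [hT₁def, Matrix.fromBlocks_apply₁₂]; exact hK₁pos i j
    · simp only [hT₁def, Matrix.fromBlocks_apply₂₁]
      by_cases h : i = j <;> simp [Matrix.one_apply, h]
    · simp [hT₁def]
  -- every eigenvalue of T₁ has modulus < 1
  have hspec : ∀ z ∈ spectrum ℂ (T₁.map Complex.ofReal), ‖z‖ < 1 := by
    intro z hz
    by_contra habs0
    push_neg at habs0
    have habs : (1 : ℝ) ≤ ‖z‖ := habs0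
    obtain ⟨v, hv0, hv⟩ := TGADSaux.exists_left_eigvec T₁ hz
    set v₁ : Fin n → ℂ := fun i => v (Sum.inl i) with hv₁def
    set v₂ : Fin n → ℂ := fun i => v (Sum.inr i) with hv₂def
    have hvelim : v = Sum.elim v₁ v₂ := by funext s; cases s <;> rfl
    have hmapT : T₁.map Complex.ofReal
        = Matrix.fromBlocks ((X₁ * R₁).map Complex.ofReal) ((-(X₁ * S₁)).map Complex.ofReal)
            (1 : Matrix (Fin n) (Fin n) ℂ) (0 : Matrix (Fin n) (Fin n) ℂ) := by
      rw [hT₁def, Matrix.fromBlocks_map,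
        Matrix.map_one _ Complex.ofReal_zero Complex.ofReal_one,
        Matrix.map_zero _ Complex.ofReal_zero]
    rw [hvelim, hmapT, Matrix.vecMul_fromBlocks] at hv
    have eq1 : ∀ j, (v₁ ᵥ* ((X₁ * R₁).map Complex.ofReal)) j + v₂ j = z * v₁ j := by
      intro j
      have h := congrFun hv (Sum.inl j)
      simpa [Matrix.vecMul_one] using h
    have eq2 : ∀ j, (v₁ ᵥ* ((-(X₁ * S₁)).map Complex.ofReal)) j = z * v₂ j := by
      intro j
      have h := congrFun hv (Sum.inr j)
      simpa [Matrix.vecMul_zero] using h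
    set w : Fin n → ℝ := fun j => ‖v₁ j‖ with hwdef
    have hw0 : ∀ j, 0 ≤ w j := fun j => norm_nonneg _
    have hwineq : ∀ j, w j ≤ (w ᵥ* (X₁ * (R₁ - S₁))) j := by
      intro j
      have e : z * (z * v₁ j) = z * ((v₁ ᵥ* ((X₁ * R₁).map Complex.ofReal)) j)
          + (v₁ ᵥ* ((-(X₁ * S₁)).map Complex.ofReal)) j := by
        rw [eq2 j, ← eq1 j]; ring
      have habs2 : ‖z‖ * (‖z‖ * w j)
          ≤ ‖z‖ * ((w ᵥ* (X₁ * R₁)) j) + (w ᵥ* (-(X₁ * S₁))) j := by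
        have h1 : ‖z * (z * v₁ j)‖ = ‖z‖ * (‖z‖ * w j) := by
          simp [hwdef, norm_mul]
        calc ‖z‖ * (‖z‖ * w j) = ‖z * (z * v₁ j)‖ := h1.symm
          _ = ‖z * ((v₁ ᵥ* ((X₁ * R₁).map Complex.ofReal)) j)
              + (v₁ ᵥ* ((-(X₁ * S₁)).map Complex.ofReal)) j‖ := by rw [e]
          _ ≤ ‖z * ((v₁ ᵥ* ((X₁ * R₁).map Complex.ofReal)) j)‖
              + ‖(v₁ ᵥ* ((-(X₁ * S₁)).map Complex.ofReal)) j‖ :=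
            norm_add_le _ _
          _ ≤ ‖z‖ * ((w ᵥ* (X₁ * R₁)) j) + (w ᵥ* (-(X₁ * S₁))) j := by
            refine add_le_add ?_ (TGADSaux.abs_vecMul_le _ hK₁pos v₁ j)
            rw [norm_mul]
            exact mul_le_mul_of_nonneg_left (TGADSaux.abs_vecMul_le _ hH₁pos v₁ j)
              (norm_nonneg z)
      have hKnn : 0 ≤ (w ᵥ* (-(X₁ * S₁))) j := by
        rw [TGADSaux.vecMul_apply]
        exact Finset.sum_nonneg fun i _ => mul_nonneg (hw0 i) (hK₁pos i j)
      have hzpos : (0 : ℝ) < ‖z‖ := lt_of_lt_of_le one_pos habs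
      have hstep2 : ‖z‖ * w j
          ≤ (w ᵥ* (X₁ * R₁)) j + (w ᵥ* (-(X₁ * S₁))) j := by
        have h4 : (w ᵥ* (-(X₁ * S₁))) j ≤ ‖z‖ * ((w ᵥ* (-(X₁ * S₁))) j) :=
          le_mul_of_one_le_left hKnn habs
        have h5 : ‖z‖ * ((w ᵥ* (X₁ * R₁)) j + (w ᵥ* (-(X₁ * S₁))) j)
            = ‖z‖ * ((w ᵥ* (X₁ * R₁)) j)
              + ‖z‖ * ((w ᵥ* (-(X₁ * S₁))) j) := by ring
        have h3 : ‖z‖ * (‖z‖ * w j)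
            ≤ ‖z‖ * ((w ᵥ* (X₁ * R₁)) j + (w ᵥ* (-(X₁ * S₁))) j) := by
          linarith [habs2, h4, h5]
        exact le_of_mul_le_mul_left h3 hzpos
      have h6 : w j ≤ ‖z‖ * w j := le_mul_of_one_le_left (hw0 j) habs
      have h7 : X₁ * (R₁ - S₁) = X₁ * R₁ + -(X₁ * S₁) := by
        rw [Matrix.mul_sub, sub_eq_add_neg]
      have h8 : (w ᵥ* (X₁ * (R₁ - S₁))) j
          = (w ᵥ* (X₁ * R₁)) j + (w ᵥ* (-(X₁ * S₁))) j := by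
        rw [h7, Matrix.vecMul_add]
        rfl
      linarith [hstep2, h6, h8]
    have hwzero := hcore w hw0 hwineq
    have hv₁0 : v₁ = 0 := by
      funext j
      have h9 := congrFun hwzero j
      simp only [Pi.zero_apply] at h9 ⊢
      have h10 : ‖v₁ j‖ = 0 := h9
      exact norm_eq_zero.mp h10
    have hv₂0 : ∀ j, v₂ j = 0 := by
      intro j
      have h10 := eq1 j
      rw [hv₁0] at h10
      simpa [Matrix.zero_vecMul] using h10
    apply hv0
    rw [hvelim, hv₁0]
    funext s
    cases s with
    | inl j => simp
    | inr j => simpa using hv₂0 j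
  have hT₁lt : specRad T₁ < 1 := TGADSaux.specRad_lt_one' T₁ hspec
  refine ⟨?_, hT₁lt⟩
  set W : Matrix (Fin n ⊕ Fin n) (Fin n ⊕ Fin n) ℝ :=
    Matrix.fromBlocks (X₂ * R₂ - X₂ * S₂ * X₁ * R₁) (X₂ * S₂ * X₁ * S₁) 1 0 with hWdef
  rcases isEmpty_or_nonempty (Fin n ⊕ Fin n) with hemp | hne
  · rw [TGADSaux.specRad_of_isEmpty, TGADSaux.specRad_of_isEmpty]
  · -- nonempty case
    have hXS₂nonpos : ∀ i j, (X₂ * S₂) i j ≤ 0 := by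
      intro i j
      rw [Matrix.mul_apply]
      refine Finset.sum_nonpos fun k _ => ?_
      have ha : 0 ≤ X₂ i k := by simpa using hreg₂a i k
      have hb : S₂ k j ≤ 0 := by simpa using hreg₂c k j
      nlinarith [mul_nonneg ha (neg_nonneg.mpr hb)]
    set Pm : Matrix (Fin n) (Fin n) ℝ := -(X₂ * S₂) with hPm
    have hPmpos : ∀ i j, 0 ≤ Pm i j := by
      intro i j
      rw [hPm]
      simp only [Matrix.neg_apply]
      exact neg_nonneg.mpr (hXS₂nonpos i j)
    have hPmK₁ : ∀ i j, Pm i j ≤ (-(X₁ * S₁)) i j := by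
      intro i j
      rw [hPm]
      simp only [Matrix.neg_apply]
      exact neg_le_neg (by simpa using hc2 i j)
    have hH₂pos : ∀ i j, 0 ≤ (X₂ * R₂) i j := by
      intro i j
      rw [Matrix.mul_apply]
      exact Finset.sum_nonneg fun k _ =>
        mul_nonneg (by simpa using hreg₂a i k) (by simpa using hreg₂b k j)
    have hH₂H₁ : ∀ i j, (X₂ * R₂) i j ≤ (X₁ * R₁) i j := fun i j => hc1 i j
    have hassoc1 : X₂ * S₂ * X₁ * R₁ = (X₂ * S₂) * (X₁ * R₁) := by
      rw [Matrix.mul_assoc]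
    have hassoc2 : X₂ * S₂ * X₁ * S₁ = (X₂ * S₂) * (X₁ * S₁) := by
      rw [Matrix.mul_assoc]
    have hWpos : ∀ i j, 0 ≤ W i j := by
      rintro (i | i) (j | j)
      · simp only [hWdef, Matrix.fromBlocks_apply₁₁, Matrix.sub_apply]
        have h1 : ((X₂ * S₂) * (X₁ * R₁)) i j ≤ 0 := by
          rw [Matrix.mul_apply]
          refine Finset.sum_nonpos fun k _ => ?_
          nlinarith [mul_nonneg (neg_nonneg.mpr (hXS₂nonpos i k)) (hH₁pos k j)]
        rw [hassoc1]
        have h2 := hH₂pos i j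
        linarith
      · simp only [hWdef, Matrix.fromBlocks_apply₁₂]
        rw [hassoc2, Matrix.mul_apply]
        refine Finset.sum_nonneg fun k _ => ?_
        nlinarith [mul_nonneg (neg_nonneg.mpr (hXS₂nonpos i k)) (neg_nonneg.mpr (hXS₁nonpos k j))]
      · simp only [hWdef, Matrix.fromBlocks_apply₂₁]
        by_cases h : i = j <;> simp [Matrix.one_apply, h]
      · simp [hWdef]
    have hcomp : ∀ c : ℝ, specRad T₁ < c → c < 1 → specRad W ≤ c := by
      intro c hcc1 hcc2
      have hc0 : 0 < c := lt_of_le_of_lt (TGADSaux.specRad_nonneg' T₁) hcc1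
      obtain ⟨u, hu, hTu⟩ := TGADSaux.exists_test_vec T₁ hT₁pos hcc1
      set x : Fin n → ℝ := fun i => u (Sum.inl i) with hxdef
      set y : Fin n → ℝ := fun i => u (Sum.inr i) with hydef
      have huelim : u = Sum.elim x y := by funext s; cases s <;> rfl
      have hxpos : ∀ i, 0 ≤ x i := fun i => (hu _).le
      have hypos : ∀ i, 0 ≤ y i := fun i => (hu _).le
      have hxc : ∀ i, ((X₁ * R₁) *ᵥ x) i + ((-(X₁ * S₁)) *ᵥ y) i ≤ c * x i := by
        intro i
        have h := hTu (Sum.inl i)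
        rw [huelim, hT₁def, Matrix.fromBlocks_mulVec] at h
        simpa using h
      have hyc : ∀ i, x i ≤ c * y i := by
        intro i
        have h := hTu (Sum.inr i)
        rw [huelim, hT₁def, Matrix.fromBlocks_mulVec] at h
        simpa [Matrix.one_mulVec, Matrix.zero_mulVec] using h
      refine TGADSaux.specRad_le_of_test W hWpos u hu c hc0.le ?_
      rintro (i | i)
      · have hblock : (W *ᵥ u) (Sum.inl i)
            = ((X₂ * R₂) *ᵥ x) i + (Pm *ᵥ ((X₁ * R₁) *ᵥ x + (-(X₁ * S₁)) *ᵥ y)) i := by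
          rw [huelim, hWdef, Matrix.fromBlocks_mulVec]
          simp only [Sum.elim_inl, Sum.elim_comp_inl, Sum.elim_comp_inr, Pi.add_apply]
          have e1 : (X₂ * R₂ - X₂ * S₂ * X₁ * R₁) *ᵥ x
              = (X₂ * R₂) *ᵥ x - (X₂ * S₂) *ᵥ ((X₁ * R₁) *ᵥ x) := by
            rw [Matrix.sub_mulVec]
            congr 1
            rw [hassoc1, ← Matrix.mulVec_mulVec]
          have e2 : (X₂ * S₂ * X₁ * S₁) *ᵥ y = (X₂ * S₂) *ᵥ ((X₁ * S₁) *ᵥ y) := by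
            rw [hassoc2, ← Matrix.mulVec_mulVec]
          have e3 : Pm *ᵥ ((X₁ * R₁) *ᵥ x + (-(X₁ * S₁)) *ᵥ y)
              = -((X₂ * S₂) *ᵥ ((X₁ * R₁) *ᵥ x)) + (X₂ * S₂) *ᵥ ((X₁ * S₁) *ᵥ y) := by
            rw [hPm]
            rw [Matrix.neg_mulVec]
            rw [Matrix.mulVec_add]
            rw [Matrix.neg_mulVec]
            rw [Matrix.mulVec_neg]
            abel
          rw [e1, e2, e3]
          simp only [Pi.add_apply, Pi.neg_apply, Pi.sub_apply]
          ring
        have hb1 : ((X₂ * R₂) *ᵥ x) i ≤ ((X₁ * R₁) *ᵥ x) i :=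
          TGADSaux.mulVec_mono_mat hH₂H₁ x hxpos i
        have hb2 : (Pm *ᵥ ((X₁ * R₁) *ᵥ x + (-(X₁ * S₁)) *ᵥ y)) i
            ≤ (Pm *ᵥ fun j => c * x j) i :=
          TGADSaux.mulVec_mono_vec Pm hPmpos (fun j => by simpa using hxc j) i
        have hb3 : (Pm *ᵥ fun j => c * x j) i = c * (Pm *ᵥ x) i := by
          have hcx : (fun j => c * x j) = c • x := rfl
          rw [hcx, Matrix.mulVec_smul]
          rfl
        have hb4 : (Pm *ᵥ x) i ≤ (Pm *ᵥ fun j => c * y j) i :=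
          TGADSaux.mulVec_mono_vec Pm hPmpos (fun j => hyc j) i
        have hb5 : (Pm *ᵥ fun j => c * y j) i = c * (Pm *ᵥ y) i := by
          have hcy : (fun j => c * y j) = c • y := rfl
          rw [hcy, Matrix.mulVec_smul]
          rfl
        have hb6 : 0 ≤ (Pm *ᵥ y) i := TGADSaux.mulVec_entry_nonneg Pm hPmpos y hypos i
        have hb7 : (Pm *ᵥ y) i ≤ ((-(X₁ * S₁)) *ᵥ y) i :=
          TGADSaux.mulVec_mono_mat hPmK₁ y hypos i
        have hb8 : c * (c * (Pm *ᵥ y) i) ≤ (Pm *ᵥ y) i := by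
          have haux : 0 ≤ (1 - c) * ((1 + c) * (Pm *ᵥ y) i) :=
            mul_nonneg (by linarith) (mul_nonneg (by linarith) hb6)
          nlinarith [haux]
        have hfinal := hxc i
        have hgoal : (W *ᵥ u) (Sum.inl i) ≤ c * x i := by
          rw [hblock]
          have hchain : (Pm *ᵥ ((X₁ * R₁) *ᵥ x + (-(X₁ * S₁)) *ᵥ y)) i
              ≤ ((-(X₁ * S₁)) *ᵥ y) i := by
            calc (Pm *ᵥ ((X₁ * R₁) *ᵥ x + (-(X₁ * S₁)) *ᵥ y)) i
                ≤ c * (Pm *ᵥ x) i := le_of_le_of_eq hb2 hb3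
              _ ≤ c * (c * (Pm *ᵥ y) i) := by
                  refine mul_le_mul_of_nonneg_left ?_ hc0.le
                  exact le_of_le_of_eq hb4 hb5
              _ ≤ (Pm *ᵥ y) i := hb8
              _ ≤ ((-(X₁ * S₁)) *ᵥ y) i := hb7
          linarith [hb1, hchain, hfinal]
        have hux : c * u (Sum.inl i) = c * x i := rfl
        rw [hux]
        exact hgoal
      · have hblock : (W *ᵥ u) (Sum.inr i) = x i := by
          rw [huelim, hWdef, Matrix.fromBlocks_mulVec]
          simp [Matrix.one_mulVec, Matrix.zero_mulVec]
        rw [hblock]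
        have huy : c * u (Sum.inr i) = c * y i := rfl
        rw [huy]
        exact hyc i
    by_contra hlt
    push_neg at hlt
    set c : ℝ := min ((specRad T₁ + specRad W) / 2) ((specRad T₁ + 1) / 2) with hcdef
    have h1 : specRad T₁ < c := lt_min (by linarith) (by linarith)
    have h2 : c < 1 := lt_of_le_of_lt (min_le_right _ _) (by linarith)
    have h3 := hcomp c h1 h2
    have h4 : c < specRad W := lt_of_le_of_lt (min_le_left _ _) (by linarith)
    linarith
end
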